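/- arXiv:1407.4228 — 2 statements merged into one kernel-verified Lean document; each statement's English description precedes it below -/
import Mathlib

section
/- Let y, w ∈ 𝔖_{Δ,r} with y ≤ w in the Bruhat order. Then for every i ∈ ℤ the nondecreasing rearrangement of the family (y(s))_{s≤i} is entrywise less than or equal to the nondecreasing rearrangement of (w(s))_{s≤i}; equivalently, for all i, t ∈ ℤ, #{s ≤ i | y(s) > t} ≤ #{s ≤ i | w(s) > t}. Likewise, for every i ∈ ℤ the nondecreasing rearrangement of (y(s))_{s≥i} is entrywise greater than or equal to that of (w(s))_{s≥i}; equivalently, for all i, t ∈ ℤ, #{s ≥ i | y(s) < t} ≤ #{s ≥ i | w(s) < t}. -/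
open scoped Classical

noncomputable section

/-- The extended affine symmetric group `𝔖_{Δ,r}`: permutations `w` of `ℤ`
with `w (i + r) = w i + r` for all `i`. -/
def AffSym (r : ℕ) : Subgroup (Equiv.Perm ℤ) where
  carrier := {w | ∀ i : ℤ, w (i + r) = w i + r}
  one_mem' := fun _ => rfl
  mul_mem' := by
    intro a b ha hb i
    simp only [Equiv.Perm.mul_apply, hb i, ha (b i)]
  inv_mem' := by
    intro a ha i
    apply a.injective
    rw [ha (a⁻¹ i)]
    simp

/-- The underlying function of the affine transposition `(i,j)`. -/
def tFun (r : ℕ) (i j : ℤ) : ℤ → ℤ := fun k =>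
  if (r : ℤ) ∣ (k - i) then j + (k - i)
  else if (r : ℤ) ∣ (k - j) then i + (k - j)
  else k

theorem tFun_invol (r : ℕ) (i j : ℤ) (h : ¬ (r : ℤ) ∣ (j - i)) :
    Function.Involutive (tFun r i j) := by
  intro k
  by_cases h1 : (r : ℤ) ∣ (k - i)
  · have e1 : tFun r i j k = j + (k - i) := by simp only [tFun]; rw [if_pos h1]
    have h2 : ¬ (r : ℤ) ∣ (j + (k - i) - i) := by
      intro hd
      apply h
      have h5 := hd.sub h1
      have h6 : j + (k - i) - i - (k - i) = j - i := by ring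
      rwa [h6] at h5
    have h3 : (r : ℤ) ∣ (j + (k - i) - j) := by simpa using h1
    rw [e1]; simp only [tFun]; rw [if_neg h2, if_pos h3]; ring
  · by_cases h2 : (r : ℤ) ∣ (k - j)
    · have e1 : tFun r i j k = i + (k - j) := by
        simp only [tFun]; rw [if_neg h1, if_pos h2]
      have h3 : (r : ℤ) ∣ (i + (k - j) - i) := by simpa using h2
      rw [e1]; simp only [tFun]; rw [if_pos h3]; ring
    · have e1 : tFun r i j k = k := by simp only [tFun]; rw [if_neg h1, if_neg h2]
      rw [e1, e1]

/-- The affine transposition `(i,j) ∈ W_r` (defined to be `1` in the degenerate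
case `i ≡ j (mod r)`). -/
def tPerm (r : ℕ) (i j : ℤ) : Equiv.Perm ℤ :=
  if h : (r : ℤ) ∣ (j - i) then 1 else Function.Involutive.toPerm _ (tFun_invol r i j h)

/-- The set of Coxeter generators `s_1, …, s_r` of `W_r`. -/
def sGen (r : ℕ) : Set (Equiv.Perm ℤ) :=
  {w | ∃ i : ℤ, 1 ≤ i ∧ i ≤ (r : ℤ) ∧ w = tPerm r i (i + 1)}

/-- The affine Weyl group `W_r`, generated by `s_1, …, s_r`. -/
def WGrp (r : ℕ) : Subgroup (Equiv.Perm ℤ) := Subgroup.closure (sGen r)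

/-- Length of an element of `W_r`: the minimal length of an expression
as a product of the generators `s_1, …, s_r`. -/
def lenW (r : ℕ) (x : Equiv.Perm ℤ) : ℕ :=
  sInf {m | ∃ l : List (Equiv.Perm ℤ), l.length = m ∧ (∀ s ∈ l, s ∈ sGen r) ∧ l.prod = x}

/-- The shift permutation `ρ : j ↦ j + 1`. -/
def rhoP : Equiv.Perm ℤ := Equiv.addRight 1

/-- For `w = ρ^a x` with `x ∈ W_r`, recovers the exponent `a`. -/
def shiftIdx (r : ℕ) (w : Equiv.Perm ℤ) : ℤ :=
  (∑ i ∈ Finset.Icc (1 : ℤ) (r : ℤ), (w i - i)) / r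

/-- Length on `𝔖_{Δ,r}`: writing `w = ρ^a x` with `x ∈ W_r`, `ℓ(w) = ℓ(x)`. -/
def alen (r : ℕ) (w : Equiv.Perm ℤ) : ℕ :=
  lenW r ((rhoP ^ shiftIdx r w)⁻¹ * w)

/-- The set `T` of affine reflections `(i,j)`, `i < j`, `i ≢ j (mod r)`. -/
def TSet (r : ℕ) : Set (Equiv.Perm ℤ) :=
  {t | ∃ i j : ℤ, i < j ∧ ¬ (r : ℤ) ∣ (j - i) ∧ t = tPerm r i j}

/-- Bruhat order on `W_r`: `y ≤ w` iff `w = t_1 ⋯ t_m y` with all `t_i ∈ T` and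
`ℓ(t_i ⋯ t_m y) > ℓ(t_{i+1} ⋯ t_m y)` for all `i`. -/
def bruhatLE (r : ℕ) (y w : Equiv.Perm ℤ) : Prop :=
  ∃ l : List (Equiv.Perm ℤ), (∀ t ∈ l, t ∈ TSet r) ∧ w = l.prod * y ∧
    ∀ k, k < l.length →
      lenW r ((l.drop (k + 1)).prod * y) < lenW r ((l.drop k).prod * y)

/-- Bruhat order extended to `𝔖_{Δ,r}`: `ρ^a y ≤ ρ^b w` iff `a = b` and `y ≤ w`. -/
def abruhatLE (r : ℕ) (y w : Equiv.Perm ℤ) : Prop :=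
  shiftIdx r y = shiftIdx r w ∧
    bruhatLE r ((rhoP ^ shiftIdx r y)⁻¹ * y) ((rhoP ^ shiftIdx r w)⁻¹ * w)

/-- `Λ_Δ(n,r)`: `n`-periodic sequences of naturals summing to `r` over a period. -/
def LambdaSet (n r : ℕ) : Set (ℤ → ℕ) :=
  {lam | (∀ i : ℤ, lam i = lam (i - n)) ∧ ∑ i ∈ Finset.Icc (1 : ℤ) (n : ℤ), lam i = r}

/-- The interval `R^λ_m ⊆ ℤ`; for `m = i + kn` with `1 ≤ i ≤ n` this is
`{λ_{k,i-1}+1, …, λ_{k,i-1}+λ_i}` where `λ_{k,i-1} = kr + λ_1 + ⋯ + λ_{i-1}`. -/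
def Rset (n r : ℕ) (lam : ℤ → ℕ) (m : ℤ) : Set ℤ :=
  {a | ((m - 1) / n) * r + ∑ t ∈ Finset.Icc (1 : ℤ) ((m - 1) % n), (lam t : ℤ) < a ∧
       a ≤ ((m - 1) / n) * r + ∑ t ∈ Finset.Icc (1 : ℤ) ((m - 1) % n + 1), (lam t : ℤ)}

/-- The finite symmetric group `𝔖_r ⊆ W_r`, generated by `s_1, …, s_{r-1}`. -/
def SymFin (r : ℕ) : Subgroup (Equiv.Perm ℤ) :=
  Subgroup.closure {w | ∃ i : ℤ, 1 ≤ i ∧ i < (r : ℤ) ∧ w = tPerm r i (i + 1)}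

/-- The Young subgroup `𝔖_λ`: elements of `𝔖_r` stabilizing each `R^λ_i`, `1 ≤ i ≤ n`. -/
def YoungSet (n r : ℕ) (lam : ℤ → ℕ) : Set (Equiv.Perm ℤ) :=
  {w | w ∈ SymFin r ∧ ∀ i : ℤ, 1 ≤ i → i ≤ (n : ℤ) → w '' Rset n r lam i = Rset n r lam i}

/-- `D^Δ_λ`: distinguished right coset representatives. -/
def DRep (n r : ℕ) (lam : ℤ → ℕ) : Set (Equiv.Perm ℤ) :=
  {d | d ∈ AffSym r ∧ ∀ w ∈ YoungSet n r lam, alen r (w * d) = alen r w + alen r d}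

/-- `D^Δ_{λ,μ} = D^Δ_λ ∩ (D^Δ_μ)⁻¹`. -/
def DRep2 (n r : ℕ) (lam mu : ℤ → ℕ) : Set (Equiv.Perm ℤ) :=
  {d | d ∈ DRep n r lam ∧ d⁻¹ ∈ DRep n r mu}

/-- The matrix `J_Δ(λ,d,μ) = (|R^λ_k ∩ d(R^μ_l)|)_{k,l}`. -/
def JMat (n r : ℕ) (lam mu : ℤ → ℕ) (d : Equiv.Perm ℤ) : ℤ → ℤ → ℕ :=
  fun k l => (Rset n r lam k ∩ (d '' Rset n r mu l)).ncard

/-- `Θ_Δ(n)`: ℕ-matrices, `n`-periodic along the diagonal, with finite rows and columns. -/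
def ThetaSet (n : ℕ) : Set (ℤ → ℤ → ℕ) :=
  {A | (∀ i j : ℤ, A (i + n) (j + n) = A i j) ∧
       (∀ i : ℤ, {j : ℤ | A i j ≠ 0}.Finite) ∧
       (∀ j : ℤ, {i : ℤ | A i j ≠ 0}.Finite)}

/-- `σ(A) = Σ_{1 ≤ i ≤ n, j ∈ ℤ} a_{i,j}`. -/
def sigmaTot (n : ℕ) (A : ℤ → ℤ → ℕ) : ℕ :=
  ∑ᶠ j : ℤ, ∑ i ∈ Finset.Icc (1 : ℤ) (n : ℤ), A i j

/-- Row sums. -/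
def roM (A : ℤ → ℤ → ℕ) : ℤ → ℕ := fun i => ∑ᶠ j : ℤ, A i j

/-- Column sums. -/
def coM (A : ℤ → ℤ → ℕ) : ℤ → ℕ := fun j => ∑ᶠ i : ℤ, A i j

/-- `σ_{i,j}(A)`: for `i < j` the sum `Σ_{s ≤ i, t ≥ j} a_{s,t}`; for `i > j` the
sum `Σ_{s ≥ i, t ≤ j} a_{s,t}`. -/
def sigmaOrd (A : ℤ → ℤ → ℕ) (i j : ℤ) : ℕ :=
  if i < j then ∑ᶠ (p : ℤ × ℤ) (_ : p.1 ≤ i ∧ j ≤ p.2), A p.1 p.2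
  else ∑ᶠ (p : ℤ × ℤ) (_ : i ≤ p.1 ∧ p.2 ≤ j), A p.1 p.2

/-- The map `η_m : A ↦ (a_{i, mn+j})_{i,j}`. -/
def etaM (n : ℕ) (m : ℤ) (A : ℤ → ℤ → ℕ) : ℤ → ℤ → ℕ := fun i j => A i (m * n + j)

/-- The double coset `𝔖_λ d 𝔖_μ`. -/
def DCoset (n r : ℕ) (lam mu : ℤ → ℕ) (d : Equiv.Perm ℤ) : Set (Equiv.Perm ℤ) :=
  {w | ∃ u ∈ YoungSet n r lam, ∃ v ∈ YoungSet n r mu, w = u * d * v}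

/-- `d_A = Σ a_{i,j} a_{k,l}` over `1 ≤ i ≤ n`, `k ≤ i`, `j < l`. -/
def dWt (n : ℕ) (A : ℤ → ℤ → ℕ) : ℕ :=
  ∑ᶠ (q : (ℤ × ℤ) × ℤ × ℤ)
    (_ : 1 ≤ q.1.1 ∧ q.1.1 ≤ (n : ℤ) ∧ q.2.1 ≤ q.1.1 ∧ q.1.2 < q.2.2),
    A q.1.1 q.1.2 * A q.2.1 q.2.2

/-- The embedding `A ↦ Ã` from `Θ_Δ(n)` to `Θ_Δ(N)`. -/
def tildeM (n N : ℕ) (A : ℤ → ℤ → ℕ) : ℤ → ℤ → ℕ := fun k l =>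
  let k0 : ℤ := (k - 1) % N + 1
  let l' : ℤ := l - ((k - 1) / N) * N
  let l0 : ℤ := (l' - 1) % N + 1
  let m : ℤ := (l' - 1) / N
  if k0 ≤ n ∧ l0 ≤ n then A k0 (l0 + m * n) else 0

/-- `Θ̃_Δ(n)`: ℤ-matrices with nonnegative off-diagonal entries, `n`-periodic
along the diagonal, with finite rows and columns. -/
def ThetaTSet (n : ℕ) : Set (ℤ → ℤ → ℤ) :=
  {A | (∀ i j : ℤ, i ≠ j → 0 ≤ A i j) ∧ (∀ i j : ℤ, A (i + n) (j + n) = A i j) ∧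
       (∀ i : ℤ, {j : ℤ | A i j ≠ 0}.Finite) ∧ (∀ j : ℤ, {i : ℤ | A i j ≠ 0}.Finite)}

/-- Row sums (ℤ-entry version). -/
def roMZ (A : ℤ → ℤ → ℤ) : ℤ → ℤ := fun i => ∑ᶠ j : ℤ, A i j

/-- Column sums (ℤ-entry version). -/
def coMZ (A : ℤ → ℤ → ℤ) : ℤ → ℤ := fun j => ∑ᶠ i : ℤ, A i j

/-- `σ_{i,j}` (ℤ-entry version). -/
def sigmaOrdZ (A : ℤ → ℤ → ℤ) (i j : ℤ) : ℤ :=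
  if i < j then ∑ᶠ (p : ℤ × ℤ) (_ : p.1 ≤ i ∧ j ≤ p.2), A p.1 p.2
  else ∑ᶠ (p : ℤ × ℤ) (_ : i ≤ p.1 ∧ p.2 ≤ j), A p.1 p.2

/-- The relation `B ⊑ A` on `Θ̃_Δ(n)`. -/
def sqLE (B A : ℤ → ℤ → ℤ) : Prop :=
  (∀ i j : ℤ, i ≠ j → sigmaOrdZ B i j ≤ sigmaOrdZ A i j) ∧ roMZ B = roMZ A ∧ coMZ B = coMZ A

/-- The vector `v_a ∈ V = 𝔽[ε,ε⁻¹]^r`: for `a = i + kr` with `1 ≤ i ≤ r`,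
`v_a = ε^{-k} v_i` where `v_1, …, v_r` is the standard basis. -/
def vb (F : Type*) [Field F] (r : ℕ) (a : ℤ) : Fin r → LaurentPolynomial F :=
  if h : 0 < r then
    Pi.single ⟨((a - 1) % (r : ℤ)).toNat, by
      have h1 : (0 : ℤ) < (r : ℤ) := by exact_mod_cast h
      have h2 : 0 ≤ (a - 1) % (r : ℤ) := Int.emod_nonneg _ (by omega)
      have h3 : (a - 1) % (r : ℤ) < (r : ℤ) := Int.emod_lt_of_pos _ h1
      omega⟩
      (LaurentPolynomial.T (-((a - 1) / (r : ℤ))))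
  else 0

/-- The bound `Σ_{1 ≤ j ≤ i} λ_j + kr` for `m = i + kn`, `1 ≤ i ≤ n`. -/
def bnd (n r : ℕ) (lam : ℤ → ℕ) (m : ℤ) : ℤ :=
  ((m - 1) / n) * r + ∑ t ∈ Finset.Icc (1 : ℤ) ((m - 1) % n + 1), (lam t : ℤ)

/-- The lattice-filtration subspace `L_m = span_𝔽{v_a | a ≤ Σ_{1≤j≤i} λ_j + kr}`. -/
def Lsub (F : Type*) [Field F] (n r : ℕ) (lam : ℤ → ℕ) (m : ℤ) :
    Submodule F (Fin r → LaurentPolynomial F) :=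
  Submodule.span F {x | ∃ a : ℤ, a ≤ bnd n r lam m ∧ x = vb F r a}

/-- The subspace `L'_m = span_𝔽{v_{d(a)} | a ≤ Σ_{1≤j≤i} μ_j + kr}`. -/
def Lsub' (F : Type*) [Field F] (n r : ℕ) (mu : ℤ → ℕ) (d : Equiv.Perm ℤ) (m : ℤ) :
    Submodule F (Fin r → LaurentPolynomial F) :=
  Submodule.span F {x | ∃ a : ℤ, a ≤ bnd n r mu m ∧ x = vb F r (d a)}
end
section AuxBasic

variable {r : ℕ} {z u v x : Equiv.Perm ℤ}

lemma dvd_helper {a b : ℤ} (c : ℤ) (h : (r : ℤ) ∣ a) (e : b = a + c * r) :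
    (r : ℤ) ∣ b := by
  obtain ⟨d, hd⟩ := h; exact ⟨d + c, by rw [e, hd]; ring⟩

lemma ndvd_helper {a b : ℤ} (c : ℤ) (h : ¬ (r : ℤ) ∣ a) (e : b = a + c * r) :
    ¬ (r : ℤ) ∣ b :=
  fun hb => h (dvd_helper (-c) hb (by rw [e]; ring))

lemma mem_affSym_iff : z ∈ AffSym r ↔ ∀ i : ℤ, z (i + r) = z i + r := Iff.rfl

lemma aff_shift (hz : z ∈ AffSym r) (c i : ℤ) : z (i + c * r) = z i + c * r := by
  induction c using Int.induction_on with
  | zero => simp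
  | succ n ih =>
      have h1 := (mem_affSym_iff.mp hz) (i + (n : ℤ) * r)
      have e : i + ((n : ℤ) + 1) * r = (i + (n : ℤ) * r) + r := by ring
      rw [e, h1, ih]; ring
  | pred n ih =>
      have h1 := (mem_affSym_iff.mp hz) (i + (-(n : ℤ) - 1) * r)
      have e : i + (-(n : ℤ) - 1) * r + (r : ℤ) = i + (-(n : ℤ)) * r := by ring
      rw [e] at h1
      have h2 : z (i + (-(n : ℤ) - 1) * r) = z (i + -(n : ℤ) * r) - r := by omega
      rw [h2, ih]; ring

lemma aff_dvd_iff (hz : z ∈ AffSym r) {a b : ℤ} :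
    (r : ℤ) ∣ (z a - z b) ↔ (r : ℤ) ∣ (a - b) := by
  constructor
  · rintro ⟨c, hc⟩
    have : z a = z (b + c * r) := by
      rw [aff_shift hz]
      have : c * (r : ℤ) = (r : ℤ) * c := mul_comm _ _
      omega
    have h2 := z.injective this
    exact ⟨c, by rw [h2]; ring⟩
  · rintro ⟨c, hc⟩
    have hab : a = b + c * r := by
      have : c * (r : ℤ) = (r : ℤ) * c := mul_comm _ _
      omega
    rw [hab, aff_shift hz]
    exact ⟨c, by ring⟩

lemma tPerm_apply {i j : ℤ} (hnd : ¬ (r : ℤ) ∣ (j - i)) (k : ℤ) :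
    tPerm r i j k = tFun r i j k := by
  rw [tPerm, dif_neg hnd]; rfl

lemma tPerm_apply_left {i j : ℤ} (hnd : ¬ (r : ℤ) ∣ (j - i)) {k : ℤ}
    (h : (r : ℤ) ∣ (k - i)) : tPerm r i j k = j + (k - i) := by
  rw [tPerm_apply hnd, tFun, if_pos h]

lemma tPerm_apply_right {i j : ℤ} (hnd : ¬ (r : ℤ) ∣ (j - i)) {k : ℤ}
    (h : (r : ℤ) ∣ (k - j)) : tPerm r i j k = i + (k - j) := by
  have h1 : ¬ (r : ℤ) ∣ (k - i) := by
    intro h2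
    exact hnd (by have := h2.sub h; simpa [show k - i - (k - j) = j - i by ring] using this)
  rw [tPerm_apply hnd, tFun, if_neg h1, if_pos h]

lemma tPerm_apply_other {i j : ℤ} (hnd : ¬ (r : ℤ) ∣ (j - i)) {k : ℤ}
    (h1 : ¬ (r : ℤ) ∣ (k - i)) (h2 : ¬ (r : ℤ) ∣ (k - j)) : tPerm r i j k = k := by
  rw [tPerm_apply hnd, tFun, if_neg h1, if_neg h2]

lemma tPerm_mem_aff (i j : ℤ) : tPerm r i j ∈ AffSym r := by
  by_cases hd : (r : ℤ) ∣ (j - i)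
  · rw [tPerm, dif_pos hd]; exact one_mem _
  · intro k
    by_cases h1 : (r : ℤ) ∣ (k - i)
    · rw [tPerm_apply_left hd h1, tPerm_apply_left hd (dvd_helper 1 h1 (by ring))]
      ring
    · by_cases h2 : (r : ℤ) ∣ (k - j)
      · rw [tPerm_apply_right hd h2, tPerm_apply_right hd (dvd_helper 1 h2 (by ring))]
        ring
      · rw [tPerm_apply_other hd h1 h2, tPerm_apply_other hd
          (ndvd_helper 1 h1 (by ring)) (ndvd_helper 1 h2 (by ring))]

lemma tPerm_mul_self (i j : ℤ) : tPerm r i j * tPerm r i j = 1 := by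
  by_cases hd : (r : ℤ) ∣ (j - i)
  · rw [tPerm, dif_pos hd]; simp
  · ext k
    simp only [Equiv.Perm.mul_apply, Equiv.Perm.one_apply]
    rw [tPerm_apply hd, tPerm_apply hd]
    exact tFun_invol r i j hd k

lemma tPerm_inv (i j : ℤ) : (tPerm r i j : Equiv.Perm ℤ)⁻¹ = tPerm r i j :=
  inv_eq_of_mul_eq_one_right (tPerm_mul_self i j)

lemma tPerm_shift (i j c : ℤ) :
    tPerm r (i + c * r) (j + c * r) = tPerm r i j := by
  have he : (j + c * r) - (i + c * r) = j - i := by ring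
  by_cases hd : (r : ℤ) ∣ (j - i)
  · rw [tPerm, tPerm, dif_pos hd, dif_pos (he ▸ hd)]
  · have hd' : ¬ (r : ℤ) ∣ (j + c * r - (i + c * r)) := he ▸ hd
    ext k
    by_cases h1 : (r : ℤ) ∣ (k - i)
    · rw [tPerm_apply_left hd h1, tPerm_apply_left hd' (dvd_helper (-c) h1 (by ring))]
      ring
    · by_cases h2 : (r : ℤ) ∣ (k - j)
      · rw [tPerm_apply_right hd h2, tPerm_apply_right hd' (dvd_helper (-c) h2 (by ring))]
        ring
      · rw [tPerm_apply_other hd h1 h2, tPerm_apply_other hd'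
          (ndvd_helper (-c) h1 (by ring)) (ndvd_helper (-c) h2 (by ring))]

lemma conj_tPerm (hu : u ∈ AffSym r) (i j : ℤ) :
    u * tPerm r i j * u⁻¹ = tPerm r (u i) (u j) := by
  by_cases hd : (r : ℤ) ∣ (j - i)
  · have hd' : (r : ℤ) ∣ (u j - u i) := (aff_dvd_iff hu).mpr hd
    rw [tPerm, tPerm, dif_pos hd, dif_pos hd']
    simp
  · have hd' : ¬ (r : ℤ) ∣ (u j - u i) := fun h => hd ((aff_dvd_iff hu).mp h)
    have huinv : u⁻¹ ∈ AffSym r := inv_mem hu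
    ext k
    simp only [Equiv.Perm.mul_apply]
    have hcr : ∀ c : ℤ, c * (r : ℤ) = (r : ℤ) * c := fun c => mul_comm _ _
    by_cases h1 : (r : ℤ) ∣ (k - u i)
    · obtain ⟨c, hc⟩ := h1
      have hki : u⁻¹ k = i + c * r := by
        have hk : k = u (i + c * r) := by rw [aff_shift hu]; have := hcr c; omega
        rw [hk]; simp
      rw [hki, tPerm_apply_left hd ⟨c, by ring⟩]
      have e : j + (i + c * r - i) = j + c * r := by ring
      rw [e, aff_shift hu, tPerm_apply_left hd' ⟨c, by have := hcr c; omega⟩]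
      have := hcr c; omega
    · by_cases h2 : (r : ℤ) ∣ (k - u j)
      · obtain ⟨c, hc⟩ := h2
        have hkj : u⁻¹ k = j + c * r := by
          have hk : k = u (j + c * r) := by rw [aff_shift hu]; have := hcr c; omega
          rw [hk]; simp
        rw [hkj, tPerm_apply_right hd ⟨c, by ring⟩]
        have e : i + (j + c * r - j) = i + c * r := by ring
        rw [e, aff_shift hu, tPerm_apply_right hd' ⟨c, by have := hcr c; omega⟩]
        have := hcr c; omega
      · have h1' : ¬ (r : ℤ) ∣ (u⁻¹ k - i) := by
          intro hx; apply h1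
          have := (aff_dvd_iff hu (a := u⁻¹ k) (b := i)).mpr hx
          simpa using this
        have h2' : ¬ (r : ℤ) ∣ (u⁻¹ k - j) := by
          intro hx; apply h2
          have := (aff_dvd_iff hu (a := u⁻¹ k) (b := j)).mpr hx
          simpa using this
        rw [tPerm_apply_other hd h1' h2', tPerm_apply_other hd'
          (fun hx => h1 (by simpa using hx)) (fun hx => h2 (by simpa using hx))]
        simp

end AuxBasic
section AuxCount

variable {r : ℕ} {z u v x : Equiv.Perm ℤ}

/-- representative of `k` modulo `r` in `[1, r]`. -/
def repW (r : ℕ) (k : ℤ) : ℤ := (k - 1) % (r : ℤ) + 1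

lemma repW_bounds (hr : 1 ≤ r) (k : ℤ) : 1 ≤ repW r k ∧ repW r k ≤ (r : ℤ) := by
  have h0 : (0 : ℤ) < (r : ℤ) := by exact_mod_cast hr
  have h1 : 0 ≤ (k - 1) % (r : ℤ) := Int.emod_nonneg _ (by omega)
  have h2 : (k - 1) % (r : ℤ) < (r : ℤ) := Int.emod_lt_of_pos _ h0
  unfold repW; omega

lemma repW_dvd (r : ℕ) (k : ℤ) : (r : ℤ) ∣ (k - repW r k) := by
  have h3 := Int.mul_ediv_add_emod (k - 1) (r : ℤ)
  exact ⟨(k - 1) / (r : ℤ), by unfold repW; omega⟩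

lemma mul_eq_zero_int {c : ℤ} (hr : 1 ≤ r) (h1 : -(r:ℤ) < (r:ℤ) * c)
    (h2 : (r:ℤ) * c < (r:ℤ)) : c = 0 := by
  have h0 : (0 : ℤ) < (r : ℤ) := by exact_mod_cast hr
  rcases lt_trichotomy c 0 with h | h | h
  · have : (r:ℤ) * c ≤ (r:ℤ) * (-1) := mul_le_mul_of_nonneg_left (by omega) (by omega)
    omega
  · exact h
  · have : (r:ℤ) * 1 ≤ (r:ℤ) * c := mul_le_mul_of_nonneg_left (by omega) (by omega)
    omega

lemma repW_unique (hr : 1 ≤ r) {a k : ℤ} (h1 : 1 ≤ a) (h2 : a ≤ (r : ℤ))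
    (hd : (r : ℤ) ∣ (k - a)) : a = repW r k := by
  obtain ⟨c, hc⟩ := hd.sub (repW_dvd r k)
  have hb := repW_bounds hr k
  have hc0 : c = 0 := mul_eq_zero_int hr (by omega) (by omega)
  rw [hc0, mul_zero] at hc
  omega

lemma repW_self (hr : 1 ≤ r) {k : ℤ} (h1 : 1 ≤ k) (h2 : k ≤ (r : ℤ)) :
    repW r k = k := (repW_unique hr h1 h2 (by simp)).symm

lemma finB (hr : 1 ≤ r) (hz : z ∈ AffSym r) (I T : ℤ) :
    {s : ℤ | I ≤ s ∧ z s < T}.Finite := by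
  have hne : (Finset.Icc (1:ℤ) (r:ℤ)).Nonempty :=
    ⟨1, by simp only [Finset.mem_Icc]; constructor <;> omega⟩
  set Mn := (Finset.Icc (1:ℤ) (r:ℤ)).inf' hne z with hMn
  apply Set.Finite.subset (Set.finite_Icc I ((r:ℤ) + (T - Mn)))
  rintro s ⟨hs1, hs2⟩
  obtain ⟨c, hc⟩ := repW_dvd r s
  have hb := repW_bounds hr s
  have hα : repW r s ∈ Finset.Icc (1:ℤ) (r:ℤ) := by
    simp only [Finset.mem_Icc]; exact hb
  have hmn : Mn ≤ z (repW r s) := Finset.inf'_le _ hα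
  have hs : s = repW r s + c * r := by have := mul_comm c (r:ℤ); omega
  have hzs : z s = z (repW r s) + c * r := by
    have h5 := aff_shift hz c (repW r s)
    rw [← hs] at h5
    exact h5
  rw [Set.mem_Icc]
  constructor
  · exact hs1
  · have hcr : c * (r:ℤ) = (r:ℤ) * c := mul_comm _ _
    omega

lemma finA (hr : 1 ≤ r) (hz : z ∈ AffSym r) (I T : ℤ) :
    {s : ℤ | s ≤ I ∧ T < z s}.Finite := by
  have hne : (Finset.Icc (1:ℤ) (r:ℤ)).Nonempty :=
    ⟨1, by simp only [Finset.mem_Icc]; constructor <;> omega⟩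
  set Mx := (Finset.Icc (1:ℤ) (r:ℤ)).sup' hne z with hMx
  apply Set.Finite.subset (Set.finite_Icc (T - Mx + 2) I)
  rintro s ⟨hs1, hs2⟩
  obtain ⟨c, hc⟩ := repW_dvd r s
  have hb := repW_bounds hr s
  have hα : repW r s ∈ Finset.Icc (1:ℤ) (r:ℤ) := by
    simp only [Finset.mem_Icc]; exact hb
  have hmx : z (repW r s) ≤ Mx := Finset.le_sup' _ hα
  have hs : s = repW r s + c * r := by have := mul_comm c (r:ℤ); omega
  have hzs : z s = z (repW r s) + c * r := by
    have h5 := aff_shift hz c (repW r s)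
    rw [← hs] at h5
    exact h5
  rw [Set.mem_Icc]
  refine ⟨?_, hs1⟩
  have hcr : c * (r:ℤ) = (r:ℤ) * c := mul_comm _ _
  omega

/-- the set of inversions of `z` with first coordinate `α`. -/
def NsetW (z : Equiv.Perm ℤ) (α : ℤ) : Set ℤ := {b | α < b ∧ z b < z α}

/-- the number of inversions of `z` with first coordinate `α`. -/
noncomputable def NInvW (z : Equiv.Perm ℤ) (α : ℤ) : ℕ := (NsetW z α).ncard

/-- total number of (normalized) inversions of `z`. -/
noncomputable def invW (r : ℕ) (z : Equiv.Perm ℤ) : ℕ :=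
  ∑ α ∈ Finset.Icc (1:ℤ) (r:ℤ), NInvW z α

lemma NsetW_finite (hr : 1 ≤ r) (hz : z ∈ AffSym r) (α : ℤ) :
    (NsetW z α).Finite :=
  (finB hr hz (α+1) (z α)).subset (by rintro b ⟨h1, h2⟩; exact ⟨by omega, h2⟩)

lemma NInvW_congr (hz : z ∈ AffSym r) {α β : ℤ} (hd : (r:ℤ) ∣ (β - α)) :
    NInvW z β = NInvW z α := by
  obtain ⟨c, hc⟩ := hd
  have hβ : β = α + c * r := by have := mul_comm c (r:ℤ); omega
  have hset : NsetW z β = (fun b => b + c * r) '' NsetW z α := by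
    ext b
    simp only [NsetW, Set.mem_setOf_eq, Set.mem_image]
    constructor
    · rintro ⟨h1, h2⟩
      refine ⟨b - c * r, ⟨?_, ?_⟩, by ring⟩
      · omega
      · have e1 : z b = z (b - c * r) + c * r := by
          have : z ((b - c*r) + c * r) = z (b - c*r) + c * r := aff_shift hz c _
          rw [show (b - c*r) + c*r = b by ring] at this
          omega
        have e2 : z β = z α + c * r := by rw [hβ]; exact aff_shift hz c _
        omega
    · rintro ⟨d, ⟨hd1, hd2⟩, rfl⟩
      have e1 : z (d + c * r) = z d + c * r := aff_shift hz c _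
      have e2 : z β = z α + c * r := by rw [hβ]; exact aff_shift hz c _
      exact ⟨by omega, by omega⟩
  unfold NInvW
  rw [hset, Set.ncard_image_of_injective _ (add_left_injective _)]

lemma invW_one : invW r 1 = 0 := by
  apply Finset.sum_eq_zero
  intro α _
  have : NsetW 1 α = ∅ := Set.eq_empty_iff_forall_notMem.mpr (fun b hb => by
    simp only [NsetW, Set.mem_setOf_eq, Equiv.Perm.one_apply] at hb; omega)
  unfold NInvW
  rw [this, Set.ncard_empty]

end AuxCount
section AuxGen

variable {r : ℕ} {z u v x : Equiv.Perm ℤ}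

lemma ndvd_one' (hr2 : 2 ≤ r) {m : ℤ} : ¬ (r : ℤ) ∣ (m + 1 - m) := by
  intro h
  have h1 : (r : ℤ) ∣ 1 := by simpa using h
  have := Int.le_of_dvd one_pos h1
  omega

lemma mult_cases (hr2 : 2 ≤ r) {d : ℤ} (hd : (r:ℤ) ∣ d) :
    d = 0 ∨ (r:ℤ) ≤ d ∨ d ≤ -(r:ℤ) := by
  obtain ⟨e, rfl⟩ := hd
  rcases lt_trichotomy e 0 with h | h | h
  · right; right
    have : (r:ℤ) * e ≤ (r:ℤ) * (-1) := mul_le_mul_of_nonneg_left (by omega) (by omega)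
    omega
  · left; rw [h, mul_zero]
  · right; left
    have : (r:ℤ) * 1 ≤ (r:ℤ) * e := mul_le_mul_of_nonneg_left (by omega) (by omega)
    omega

lemma gen_apply_m (hr2 : 2 ≤ r) {m k : ℤ} (h : (r:ℤ) ∣ (k - m)) :
    tPerm r m (m+1) k = k + 1 := by
  rw [tPerm_apply_left (ndvd_one' hr2) h]; ring

lemma gen_apply_m1 (hr2 : 2 ≤ r) {m k : ℤ} (h : (r:ℤ) ∣ (k - (m+1))) :
    tPerm r m (m+1) k = k - 1 := by
  rw [tPerm_apply_right (ndvd_one' hr2) h]; ring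

lemma gen_apply_o (hr2 : 2 ≤ r) {m k : ℤ} (h1 : ¬ (r:ℤ) ∣ (k - m))
    (h2 : ¬ (r:ℤ) ∣ (k - (m+1))) : tPerm r m (m+1) k = k :=
  tPerm_apply_other (ndvd_one' hr2) h1 h2

lemma gen_invol (hr2 : 2 ≤ r) (m : ℤ) (k : ℤ) :
    tPerm r m (m+1) (tPerm r m (m+1) k) = k := by
  have h : (tPerm r m (m+1) * tPerm r m (m+1)) k = (1 : Equiv.Perm ℤ) k := by
    rw [tPerm_mul_self]
  simpa using h

lemma claimM (hr2 : 2 ≤ r) {m α : ℤ} (h : (r:ℤ) ∣ (α - m)) (c : ℤ) :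
    α < tPerm r m (m+1) c ↔ (c = α ∨ α + 1 < c) := by
  by_cases hc1 : (r:ℤ) ∣ (c - m)
  · rw [gen_apply_m hr2 hc1]
    have hd : (r:ℤ) ∣ (c - α) := by
      have := hc1.sub h
      simpa [show c - m - (α - m) = c - α by ring] using this
    have := mult_cases hr2 hd
    omega
  · by_cases hc2 : (r:ℤ) ∣ (c - (m+1))
    · rw [gen_apply_m1 hr2 hc2]
      have hne : c ≠ α := by
        rintro rfl
        have := hc2.sub h
        have h1 : (r:ℤ) ∣ 1 := by
          have h9 := dvd_neg.mpr this
          simpa [show -(c - (m+1) - (c - m)) = 1 by ring] using h9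
        have := Int.le_of_dvd one_pos h1
        omega
      omega
    · rw [gen_apply_o hr2 hc1 hc2]
      have hne : c ≠ α := by rintro rfl; exact hc1 h
      have hne2 : c ≠ α + 1 := by
        rintro rfl
        exact hc2 (by simpa [show α + 1 - (m+1) = α - m by ring] using h)
      omega

lemma claimM1 (hr2 : 2 ≤ r) {m α : ℤ} (h : (r:ℤ) ∣ (α - (m+1))) (c : ℤ) :
    α < tPerm r m (m+1) c ↔ (α - 1 < c ∧ c ≠ α) := by
  by_cases hc1 : (r:ℤ) ∣ (c - m)
  · rw [gen_apply_m hr2 hc1]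
    have hne : c ≠ α := by
      rintro rfl
      have := h.sub hc1
      have h1 : (r:ℤ) ∣ 1 := by
        have h9 := dvd_neg.mpr this
        simpa [show -(c - (m+1) - (c - m)) = 1 by ring] using h9
      have := Int.le_of_dvd one_pos h1
      omega
    omega
  · by_cases hc2 : (r:ℤ) ∣ (c - (m+1))
    · rw [gen_apply_m1 hr2 hc2]
      have hd : (r:ℤ) ∣ (c - α) := by
        have := hc2.sub h
        simpa [show c - (m+1) - (α - (m+1)) = c - α by ring] using this
      have := mult_cases hr2 hd
      omega
    · rw [gen_apply_o hr2 hc1 hc2]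
      have hne : c ≠ α := by rintro rfl; exact hc2 h
      omega

lemma claimO (hr2 : 2 ≤ r) {m α : ℤ} (h1 : ¬ (r:ℤ) ∣ (α - m))
    (h2 : ¬ (r:ℤ) ∣ (α - (m+1))) (c : ℤ) :
    α < tPerm r m (m+1) c ↔ α < c := by
  by_cases hc1 : (r:ℤ) ∣ (c - m)
  · rw [gen_apply_m hr2 hc1]
    have hne : c ≠ α := by rintro rfl; exact h1 hc1
    omega
  · by_cases hc2 : (r:ℤ) ∣ (c - (m+1))
    · rw [gen_apply_m1 hr2 hc2]
      have hne : c ≠ α := by rintro rfl; exact h2 hc2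
      have hne2 : c ≠ α + 1 := by
        rintro rfl
        exact h1 (by simpa [show α + 1 - (m+1) = α - m by ring] using hc2)
      omega
    · rw [gen_apply_o hr2 hc1 hc2]

lemma Nset_mul_gen (hr2 : 2 ≤ r) (z : Equiv.Perm ℤ) (m α : ℤ) :
    NsetW (z * tPerm r m (m+1)) α
      = ⇑(tPerm r m (m+1)) ''
          {c | α < tPerm r m (m+1) c ∧ z c < z (tPerm r m (m+1) α)} := by
  set s := tPerm r m (m+1) with hs
  ext b
  simp only [NsetW, Set.mem_setOf_eq, Set.mem_image, Equiv.Perm.mul_apply]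
  constructor
  · intro ⟨h1, h2⟩
    exact ⟨s b, ⟨by rw [gen_invol hr2]; exact h1, h2⟩, gen_invol hr2 m b⟩
  · rintro ⟨c, ⟨hc1, hc2⟩, rfl⟩
    exact ⟨hc1, by rw [gen_invol hr2]; exact hc2⟩

lemma aff_pair (hz : z ∈ AffSym r) {a b : ℤ} (hd : (r:ℤ) ∣ (b - a)) :
    z b - z a = b - a := by
  obtain ⟨c, hc⟩ := hd
  have hb : b = a + c * r := by have := mul_comm c (r:ℤ); omega
  rw [hb, aff_shift hz]
  have := mul_comm c (r:ℤ); omega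

lemma NInv_gen_m (hr2 : 2 ≤ r) (hz : z ∈ AffSym r) {m α : ℤ}
    (h : (r:ℤ) ∣ (α - m)) :
    NInvW (z * tPerm r m (m+1)) α
      = NInvW z (α+1) + (if z m < z (m+1) then 1 else 0) := by
  have hr1 : 1 ≤ r := by omega
  have hsα : tPerm r m (m+1) α = α + 1 := gen_apply_m hr2 h
  have hset := Nset_mul_gen hr2 z m α
  rw [hsα] at hset
  have hin : {c | α < tPerm r m (m+1) c ∧ z c < z (α+1)}
      = {c | (c = α ∨ α + 1 < c) ∧ z c < z (α+1)} := by
    ext c; simp only [Set.mem_setOf_eq, claimM hr2 h c]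
  have haff1 : z α - z m = α - m := aff_pair hz h
  have haff2 : z (α+1) - z (m+1) = α + 1 - (m+1) :=
    aff_pair hz (by simpa [show α + 1 - (m+1) = α - m by ring] using h)
  by_cases hlt : z m < z (m+1)
  · rw [if_pos hlt]
    have h2 : {c | (c = α ∨ α + 1 < c) ∧ z c < z (α+1)} = insert α (NsetW z (α+1)) := by
      ext c
      simp only [Set.mem_setOf_eq, Set.mem_insert_iff, NsetW]
      constructor
      · rintro ⟨h3 | h3, h4⟩
        · exact Or.inl h3
        · exact Or.inr ⟨h3, h4⟩
      · rintro (rfl | ⟨h3, h4⟩)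
        · exact ⟨Or.inl rfl, by omega⟩
        · exact ⟨Or.inr h3, h4⟩
    unfold NInvW
    rw [hset, hin, h2, Set.ncard_image_of_injective _ (tPerm r m (m+1)).injective,
      Set.ncard_insert_of_notMem (by simp only [NsetW, Set.mem_setOf_eq]; omega)
        (NsetW_finite hr1 hz (α+1))]
  · rw [if_neg hlt]
    have h2 : {c | (c = α ∨ α + 1 < c) ∧ z c < z (α+1)} = NsetW z (α+1) := by
      ext c
      simp only [Set.mem_setOf_eq, NsetW]
      constructor
      · rintro ⟨h3 | h3, h4⟩
        · subst h3; omega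
        · exact ⟨h3, h4⟩
      · rintro ⟨h3, h4⟩
        exact ⟨Or.inr h3, h4⟩
    unfold NInvW
    rw [hset, hin, h2, Set.ncard_image_of_injective _ (tPerm r m (m+1)).injective,
      add_zero]

lemma NInv_gen_m1 (hr2 : 2 ≤ r) (hz : z ∈ AffSym r) {m α : ℤ}
    (h : (r:ℤ) ∣ (α - (m+1))) :
    NInvW (z * tPerm r m (m+1)) α + (if z (m+1) < z m then 1 else 0)
      = NInvW z (α-1) := by
  have hr1 : 1 ≤ r := by omega
  have hsα : tPerm r m (m+1) α = α - 1 := gen_apply_m1 hr2 h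
  have hset := Nset_mul_gen hr2 z m α
  rw [hsα] at hset
  have hin : {c | α < tPerm r m (m+1) c ∧ z c < z (α-1)}
      = {c | (α - 1 < c ∧ c ≠ α) ∧ z c < z (α-1)} := by
    ext c; simp only [Set.mem_setOf_eq, claimM1 hr2 h c]
  have haff1 : z α - z (m+1) = α - (m+1) := aff_pair hz h
  have haff2 : z (α-1) - z m = α - 1 - m :=
    aff_pair hz (by simpa [show α - 1 - m = α - (m+1) by ring] using h)
  by_cases hgt : z (m+1) < z m
  · rw [if_pos hgt]
    have hα : α ∈ NsetW z (α-1) := ⟨by omega, by omega⟩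
    have h2 : {c | (α - 1 < c ∧ c ≠ α) ∧ z c < z (α-1)} = NsetW z (α-1) \ {α} := by
      ext c
      simp only [Set.mem_setOf_eq, Set.mem_diff, Set.mem_singleton_iff, NsetW]
      constructor
      · rintro ⟨⟨h3, h4⟩, h5⟩
        exact ⟨⟨h3, h5⟩, h4⟩
      · rintro ⟨⟨h3, h5⟩, h4⟩
        exact ⟨⟨h3, h4⟩, h5⟩
    unfold NInvW
    rw [hset, hin, h2, Set.ncard_image_of_injective _ (tPerm r m (m+1)).injective]
    exact Set.ncard_diff_singleton_add_one hα (NsetW_finite hr1 hz (α-1))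
  · rw [if_neg hgt, add_zero]
    have h2 : {c | (α - 1 < c ∧ c ≠ α) ∧ z c < z (α-1)} = NsetW z (α-1) := by
      ext c
      simp only [Set.mem_setOf_eq, NsetW]
      constructor
      · rintro ⟨⟨h3, _⟩, h5⟩
        exact ⟨h3, h5⟩
      · rintro ⟨h3, h5⟩
        refine ⟨⟨h3, ?_⟩, h5⟩
        rintro rfl; omega
    unfold NInvW
    rw [hset, hin, h2, Set.ncard_image_of_injective _ (tPerm r m (m+1)).injective]

lemma NInv_gen_o (hr2 : 2 ≤ r) (hz : z ∈ AffSym r) {m α : ℤ}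
    (h1 : ¬ (r:ℤ) ∣ (α - m)) (h2 : ¬ (r:ℤ) ∣ (α - (m+1))) :
    NInvW (z * tPerm r m (m+1)) α = NInvW z α := by
  have hsα : tPerm r m (m+1) α = α := gen_apply_o hr2 h1 h2
  have hset := Nset_mul_gen hr2 z m α
  rw [hsα] at hset
  have hin : {c | α < tPerm r m (m+1) c ∧ z c < z α} = NsetW z α := by
    ext c; simp only [Set.mem_setOf_eq, NsetW, claimO hr2 h1 h2 c]
  unfold NInvW
  rw [hset, hin, Set.ncard_image_of_injective _ (tPerm r m (m+1)).injective]

lemma invW_gen (hr2 : 2 ≤ r) (hz : z ∈ AffSym r) (m : ℤ) :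
    invW r (z * tPerm r m (m+1)) + (if z (m+1) < z m then 1 else 0)
      = invW r z + (if z m < z (m+1) then 1 else 0) := by
  have hr1 : 1 ≤ r := by omega
  have hb₀ := repW_bounds hr1 m
  have hb₁ := repW_bounds hr1 (m+1)
  have hd₀ : (r:ℤ) ∣ (repW r m - m) := by
    obtain ⟨c, hc⟩ := repW_dvd r m; exact ⟨-c, by rw [mul_neg]; omega⟩
  have hd₁ : (r:ℤ) ∣ (repW r (m+1) - (m+1)) := by
    obtain ⟨c, hc⟩ := repW_dvd r (m+1); exact ⟨-c, by rw [mul_neg]; omega⟩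
  have hne : repW r m ≠ repW r (m+1) := by
    intro he
    have hsub := hd₁.sub hd₀
    rw [← he] at hsub
    have h1 : (r:ℤ) ∣ 1 := by
      have h9 := dvd_neg.mpr hsub
      simpa [show -(repW r m - (m+1) - (repW r m - m)) = 1 by ring] using h9
    have := Int.le_of_dvd one_pos h1
    omega
  have hm₀ : repW r m ∈ Finset.Icc (1:ℤ) (r:ℤ) := by
    simp only [Finset.mem_Icc]; exact hb₀
  have hm₁ : repW r (m+1) ∈ (Finset.Icc (1:ℤ) (r:ℤ)).erase (repW r m) :=
    Finset.mem_erase.mpr ⟨fun he => hne he.symm, by simp only [Finset.mem_Icc]; exact hb₁⟩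
  have hsum : ∀ w : Equiv.Perm ℤ, invW r w
      = NInvW w (repW r m) + (NInvW w (repW r (m+1))
        + ∑ α ∈ ((Finset.Icc (1:ℤ) (r:ℤ)).erase (repW r m)).erase (repW r (m+1)),
            NInvW w α) := by
    intro w
    unfold invW
    rw [← Finset.add_sum_erase _ _ hm₀, ← Finset.add_sum_erase _ _ hm₁]
  have hE : ∀ α ∈ ((Finset.Icc (1:ℤ) (r:ℤ)).erase (repW r m)).erase (repW r (m+1)),
      NInvW (z * tPerm r m (m+1)) α = NInvW z α := by
    intro α hα
    have h45 := Finset.mem_erase.mp hα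
    have h67 := Finset.mem_erase.mp h45.2
    have hα1 := h45.1
    have hα2 := h67.1
    have hα3 := Finset.mem_Icc.mp h67.2
    refine NInv_gen_o hr2 hz ?_ ?_
    · intro hdvd
      exact hα2 (by
        have := repW_unique (k := m) hr1 hα3.1 hα3.2 (by
          obtain ⟨c, hc⟩ := hdvd; exact ⟨-c, by rw [mul_neg]; omega⟩)
        omega)
    · intro hdvd
      exact hα1 (by
        have := repW_unique (k := m+1) hr1 hα3.1 hα3.2 (by
          obtain ⟨c, hc⟩ := hdvd; exact ⟨-c, by rw [mul_neg]; omega⟩)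
        omega)
  have hc₀ : NInvW z (repW r m + 1) = NInvW z (repW r (m+1)) := by
    apply NInvW_congr hz
    have h9 := hd₀.sub hd₁
    simpa [show repW r m - m - (repW r (m+1) - (m+1)) = repW r m + 1 - repW r (m+1) by ring]
      using h9
  have hc₁ : NInvW z (repW r (m+1) - 1) = NInvW z (repW r m) := by
    apply NInvW_congr hz
    have h9 := hd₁.sub hd₀
    simpa [show repW r (m+1) - (m+1) - (repW r m - m) = repW r (m+1) - 1 - repW r m by ring]
      using h9
  have e₀ := NInv_gen_m (z := z) hr2 hz hd₀
  have e₁ := NInv_gen_m1 (z := z) hr2 hz hd₁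
  have h1 := hsum (z * tPerm r m (m+1))
  have h2 := hsum z
  have h3 : (∑ α ∈ ((Finset.Icc (1:ℤ) (r:ℤ)).erase (repW r m)).erase (repW r (m+1)),
      NInvW (z * tPerm r m (m+1)) α)
      = ∑ α ∈ ((Finset.Icc (1:ℤ) (r:ℤ)).erase (repW r m)).erase (repW r (m+1)),
      NInvW z α := Finset.sum_congr rfl hE
  omega

end AuxGen
section AuxLen

variable {r : ℕ} {z u v x g : Equiv.Perm ℤ}

lemma invW_gen_lt (hr2 : 2 ≤ r) (hz : z ∈ AffSym r) (m : ℤ) (h : z (m+1) < z m) :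
    invW r (z * tPerm r m (m+1)) + 1 = invW r z := by
  have h0 := invW_gen hr2 hz m
  rw [if_pos h, if_neg (by omega)] at h0
  omega

lemma invW_gen_gt (hr2 : 2 ≤ r) (hz : z ∈ AffSym r) (m : ℤ) (h : z m < z (m+1)) :
    invW r (z * tPerm r m (m+1)) = invW r z + 1 := by
  have h0 := invW_gen hr2 hz m
  rw [if_pos h, if_neg (by omega)] at h0
  omega

lemma invW_gen_le (hr2 : 2 ≤ r) (hz : z ∈ AffSym r) (m : ℤ) :
    invW r (z * tPerm r m (m+1)) ≤ invW r z + 1 := by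
  rcases lt_trichotomy (z m) (z (m+1)) with h | h | h
  · rw [invW_gen_gt hr2 hz m h]
  · exact absurd (z.injective h) (by omega)
  · have := invW_gen_lt hr2 hz m h; omega

lemma sGen_subset_aff : sGen r ⊆ (AffSym r : Set (Equiv.Perm ℤ)) := by
  rintro g ⟨i, h1, h2, rfl⟩; exact tPerm_mem_aff i (i+1)

lemma WGrp_le_aff : WGrp r ≤ AffSym r := (Subgroup.closure_le _).mpr sGen_subset_aff

lemma sGen_mul_self (hg : g ∈ sGen r) : g * g = 1 := by
  obtain ⟨i, _, _, rfl⟩ := hg; exact tPerm_mul_self i (i+1)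

lemma gen_mem_WGrp (hr : 1 ≤ r) (i : ℤ) : tPerm r i (i+1) ∈ WGrp r := by
  have hb := repW_bounds hr i
  obtain ⟨c, hc⟩ := repW_dvd r i
  have hsh := tPerm_shift (r := r) (repW r i) (repW r i + 1) c
  have e1 : repW r i + c * r = i := by have := mul_comm c (r:ℤ); omega
  have e2 : repW r i + 1 + c * r = i + 1 := by omega
  rw [e1, e2] at hsh
  rw [hsh]
  exact Subgroup.subset_closure ⟨repW r i, hb.1, hb.2, rfl⟩

lemma hr2_of_ndvd (hr : 1 ≤ r) {a : ℤ} (hnd : ¬ (r:ℤ) ∣ a) : 2 ≤ r := by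
  rcases Nat.lt_or_ge r 2 with h | h
  · have : r = 1 := by omega
    subst this
    exact absurd (by simp) hnd
  · exact h

lemma refl_mem_WGrp (hr : 1 ≤ r) : ∀ n : ℕ, ∀ i j : ℤ, i < j → j - i = (n:ℤ) →
    ¬ (r:ℤ) ∣ (j - i) → tPerm r i j ∈ WGrp r := by
  intro n
  induction n using Nat.strong_induction_on with
  | _ n ih =>
  intro i j hij hn hnd
  have hr2 : 2 ≤ r := hr2_of_ndvd hr hnd
  by_cases hbase : j = i + 1
  · subst hbase; exact gen_mem_WGrp hr i
  · have hj2 : i + 2 ≤ j := by omega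
    by_cases hdd : (r:ℤ) ∣ (j - 1 - i)
    · have h3 : i + 3 ≤ j := by
        rcases mult_cases hr2 hdd with h | h | h <;> omega
      have hnd2 : ¬ (r:ℤ) ∣ (j - 1 - (i+1)) := by
        intro hx
        have h9 := hdd.sub hx
        have h1 : (r:ℤ) ∣ 1 := by
          simpa [show j - 1 - i - (j - 1 - (i+1)) = 1 by ring] using h9
        have := Int.le_of_dvd one_pos h1
        omega
      have ht' : tPerm r (i+1) (j-1) ∈ WGrp r := by
        refine ih (n-2) (by omega) (i+1) (j-1) (by omega) (by push_cast; omega) hnd2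
      have hs := gen_mem_WGrp hr i
      have hkey : tPerm r i (i+1) * tPerm r (i+1) (j-1) * (tPerm r i (i+1))⁻¹
          = tPerm r i j := by
        rw [conj_tPerm (tPerm_mem_aff i (i+1)) (i+1) (j-1)]
        have e1 : tPerm r i (i+1) (i+1) = i := by
          rw [tPerm_apply_right (ndvd_one' hr2) (by simp)]; ring
        have e2 : tPerm r i (i+1) (j-1) = j := by
          rw [gen_apply_m hr2 hdd]; ring
        rw [e1, e2]
      have hmem := mul_mem (mul_mem hs ht') (inv_mem hs)
      rwa [hkey] at hmem
    · have ht' : tPerm r i (j-1) ∈ WGrp r := by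
        refine ih (n-1) (by omega) i (j-1) (by omega) (by push_cast; omega)
          (by simpa using hdd)
      have hs := gen_mem_WGrp hr (j-1)
      have hnd1 : ¬ (r:ℤ) ∣ (j - (j-1)) := by
        intro hx
        have h1 : (r:ℤ) ∣ 1 := by simpa using hx
        have := Int.le_of_dvd one_pos h1
        omega
      have hsj : tPerm r (j-1) (j-1+1) = tPerm r (j-1) j := by norm_num
      rw [hsj] at hs
      have hkey : tPerm r (j-1) j * tPerm r i (j-1) * (tPerm r (j-1) j)⁻¹
          = tPerm r i j := by
        rw [conj_tPerm (tPerm_mem_aff (j-1) j) i (j-1)]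
        have e1 : tPerm r (j-1) j i = i := by
          refine tPerm_apply_other hnd1 ?_ ?_
          · intro hx
            exact hdd (by
              have h9 := dvd_neg.mpr hx
              simpa [show -(i - (j-1)) = j - 1 - i by ring] using h9)
          · intro hx
            exact hnd (by
              have h9 := dvd_neg.mpr hx
              simpa [show -(i - j) = j - i by ring] using h9)
        have e2 : tPerm r (j-1) j (j-1) = j := by
          rw [tPerm_apply_left hnd1 (by simp)]; ring
        rw [e1, e2]
      have hmem := mul_mem (mul_mem hs ht') (inv_mem hs)
      rwa [hkey] at hmem

/-- the sum `∑_{1 ≤ α ≤ r} (z α - α)`. -/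
noncomputable def phiW (r : ℕ) (z : Equiv.Perm ℤ) : ℤ :=
  ∑ α ∈ Finset.Icc (1:ℤ) (r:ℤ), (z α - α)

lemma phiW_one : phiW r 1 = 0 := by
  unfold phiW
  apply Finset.sum_eq_zero
  intro α _
  simp

lemma phiW_mul (hr : 1 ≤ r) (hu : u ∈ AffSym r) (hv : v ∈ AffSym r) :
    phiW r (u * v) = phiW r u + phiW r v := by
  have key : ∑ α ∈ Finset.Icc (1:ℤ) (r:ℤ), (u (v α) - v α)
      = ∑ α ∈ Finset.Icc (1:ℤ) (r:ℤ), (u α - α) := by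
    apply Finset.sum_nbij' (i := fun α => repW r (v α)) (j := fun α => repW r (v⁻¹ α))
    · intro α _
      simp only [Finset.mem_Icc]
      exact repW_bounds hr (v α)
    · intro α _
      simp only [Finset.mem_Icc]
      exact repW_bounds hr (v⁻¹ α)
    · intro α hα
      rw [Finset.mem_Icc] at hα
      have hd : (r:ℤ) ∣ (v α - repW r (v α)) := repW_dvd r (v α)
      have hd2 : (r:ℤ) ∣ (v⁻¹ (v α) - v⁻¹ (repW r (v α))) :=
        (aff_dvd_iff (inv_mem hv)).mpr hd
      rw [show v⁻¹ (v α) = α from v.symm_apply_apply α] at hd2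
      refine (repW_unique hr hα.1 hα.2 ?_).symm
      obtain ⟨c, hc⟩ := hd2
      exact ⟨-c, by rw [mul_neg]; omega⟩
    · intro α hα
      rw [Finset.mem_Icc] at hα
      have hd : (r:ℤ) ∣ (v⁻¹ α - repW r (v⁻¹ α)) := repW_dvd r (v⁻¹ α)
      have hd2 : (r:ℤ) ∣ (v (v⁻¹ α) - v (repW r (v⁻¹ α))) :=
        (aff_dvd_iff hv).mpr hd
      rw [show v (v⁻¹ α) = α from v.apply_symm_apply α] at hd2
      refine (repW_unique hr hα.1 hα.2 ?_).symm
      obtain ⟨c, hc⟩ := hd2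
      exact ⟨-c, by rw [mul_neg]; omega⟩
    · intro α _
      have hd : (r:ℤ) ∣ (v α - repW r (v α)) := repW_dvd r (v α)
      have h1 : u (v α) - u (repW r (v α)) = v α - repW r (v α) := aff_pair hu hd
      omega
  unfold phiW
  have h1 : ∑ α ∈ Finset.Icc (1:ℤ) (r:ℤ), ((u * v) α - α)
      = ∑ α ∈ Finset.Icc (1:ℤ) (r:ℤ), ((u (v α) - v α) + (v α - α)) := by
    apply Finset.sum_congr rfl
    intro α _
    simp only [Equiv.Perm.mul_apply]
    ring
  rw [h1, Finset.sum_add_distrib, key]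

lemma phiW_gen (hr : 1 ≤ r) (hgen : g ∈ sGen r) : phiW r g = 0 := by
  obtain ⟨i, h1, h2, rfl⟩ := hgen
  by_cases hr2 : 2 ≤ r
  · have hd₁ : (r:ℤ) ∣ (repW r (i+1) - (i+1)) := by
      obtain ⟨c, hc⟩ := repW_dvd r (i+1); exact ⟨-c, by rw [mul_neg]; omega⟩
    have hb₁ := repW_bounds hr (i+1)
    have hne : i ≠ repW r (i+1) := by
      intro he
      have h9 : (r:ℤ) ∣ (i - (i+1)) := by
        rw [show i - (i+1) = repW r (i+1) - (i+1) by omega]; exact hd₁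
      have h8 : (r:ℤ) ∣ 1 := by
        have h7 := dvd_neg.mpr h9
        simpa [show -(i - (i+1)) = 1 by ring] using h7
      have := Int.le_of_dvd one_pos h8
      omega
    have hm₀ : i ∈ Finset.Icc (1:ℤ) (r:ℤ) := by simp only [Finset.mem_Icc]; exact ⟨h1, h2⟩
    have hm₁ : repW r (i+1) ∈ (Finset.Icc (1:ℤ) (r:ℤ)).erase i :=
      Finset.mem_erase.mpr ⟨fun he => hne he.symm, by simp only [Finset.mem_Icc]; exact hb₁⟩
    unfold phiW
    rw [← Finset.add_sum_erase _ _ hm₀, ← Finset.add_sum_erase _ _ hm₁]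
    have e1 : tPerm r i (i+1) i = i + 1 := gen_apply_m hr2 (by simp)
    have e2 : tPerm r i (i+1) (repW r (i+1)) = repW r (i+1) - 1 := gen_apply_m1 (m := i) hr2 hd₁
    have e3 : ∑ α ∈ ((Finset.Icc (1:ℤ) (r:ℤ)).erase i).erase (repW r (i+1)),
        (tPerm r i (i+1) α - α) = 0 := by
      apply Finset.sum_eq_zero
      intro α hα
      have h45 := Finset.mem_erase.mp hα
      have h67 := Finset.mem_erase.mp h45.2
      have hα3 := Finset.mem_Icc.mp h67.2
      have hno1 : ¬ (r:ℤ) ∣ (α - i) := by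
        intro hx
        refine h67.1 ?_
        have h9 := repW_unique (k := α) hr h1 h2 hx
        have h10 := repW_self hr hα3.1 hα3.2
        omega
      have hno2 : ¬ (r:ℤ) ∣ (α - (i+1)) := by
        intro hx
        refine h45.1 ?_
        have h9 := hx.sub hd₁
        have h10 : (r:ℤ) ∣ (repW r (i+1) - α) := by
          have h11 := dvd_neg.mpr h9
          simpa [show -(α - (i+1) - (repW r (i+1) - (i+1))) = repW r (i+1) - α by ring]
            using h11
        obtain ⟨c, hc⟩ := h10
        have := repW_unique (k := repW r (i+1)) hr hα3.1 hα3.2 ⟨c, by omega⟩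
        have h12 := repW_self hr hb₁.1 hb₁.2
        omega
      rw [gen_apply_o hr2 hno1 hno2]
      ring
    rw [e1, e2, e3]
    ring
  · have hr1 : r = 1 := by omega
    subst hr1
    have : tPerm 1 i (i+1) = 1 := by
      rw [tPerm, dif_pos (by simp)]
    rw [this, phiW_one]

lemma phiW_WGrp (hr : 1 ≤ r) (hz : z ∈ WGrp r) : phiW r z = 0 := by
  induction hz using Subgroup.closure_induction with
  | mem g hg => exact phiW_gen hr hg
  | one => exact phiW_one
  | mul u v hu hv pu pv =>
      rw [phiW_mul hr (WGrp_le_aff hu) (WGrp_le_aff hv), pu, pv]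
      ring
  | inv u hu pu =>
      have h9 := phiW_mul hr (WGrp_le_aff hu) (WGrp_le_aff (inv_mem hu))
      rw [mul_inv_cancel, phiW_one, pu] at h9
      omega

lemma no_descent_eq_one (hr : 1 ≤ r) (hz : z ∈ WGrp r)
    (h : ∀ α : ℤ, 1 ≤ α → α ≤ (r:ℤ) → z α < z (α+1)) : z = 1 := by
  have haff := WGrp_le_aff hz
  have hall : ∀ α : ℤ, z α < z (α + 1) := by
    intro α
    have hb := repW_bounds hr α
    have h1 : z α - z (repW r α) = α - repW r α := aff_pair haff (repW_dvd r α)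
    have h2 : z (α+1) - z (repW r α + 1) = α + 1 - (repW r α + 1) := by
      refine aff_pair haff ?_
      obtain ⟨c, hc⟩ := repW_dvd r α
      exact ⟨c, by omega⟩
    have := h (repW r α) hb.1 hb.2
    omega
  have hSM : StrictMono z := strictMono_int_of_lt_succ hall
  have hsucc : ∀ i : ℤ, z (i+1) = z i + 1 := by
    intro i
    by_contra hcon
    have h1 : z i + 1 < z (i+1) := by have := hall i; omega
    obtain ⟨c, hc⟩ := z.surjective (z i + 1)
    rcases le_or_gt c i with h2 | h2
    · have h3 : z c ≤ z i := hSM.le_iff_le.mpr h2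
      omega
    · have h3 : z (i+1) ≤ z c := hSM.le_iff_le.mpr (by omega)
      omega
  have hlin : ∀ i : ℤ, z i = i + z 0 := by
    intro i
    induction i using Int.induction_on with
    | zero => simp
    | succ n ihn => rw [hsucc, ihn]; ring
    | pred n ihn =>
        have h9 := hsucc (-(n:ℤ) - 1)
        have e : -(n:ℤ) - 1 + 1 = -(n:ℤ) := by ring
        rw [e] at h9
        omega
  have hphi := phiW_WGrp hr hz
  have hsum : phiW r z = (r:ℤ) * z 0 := by
    unfold phiW
    have hcong : ∑ α ∈ Finset.Icc (1:ℤ) (r:ℤ), (z α - α)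
        = ∑ _α ∈ Finset.Icc (1:ℤ) (r:ℤ), z 0 :=
      Finset.sum_congr rfl (fun α _ => by rw [hlin α]; ring)
    rw [hcong, Finset.sum_const, Int.card_Icc]
    simp only [nsmul_eq_mul]
    have : ((r:ℤ) + 1 - 1).toNat = r := by omega
    rw [this]
  have hz0 : z 0 = 0 := by
    have h0 : (0:ℤ) < (r:ℤ) := by exact_mod_cast hr
    have h9 : (r:ℤ) * z 0 = 0 := by omega
    rcases mul_eq_zero.mp h9 with h | h
    · omega
    · exact h
  ext k
  rw [hlin k, hz0]
  simp

lemma word_reverse : ∀ (x : Equiv.Perm ℤ) (l : List (Equiv.Perm ℤ)),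
    (∀ g ∈ l, g ∈ sGen r) → l.prod = x → l.reverse.prod = x⁻¹ := by
  intro x l
  induction l generalizing x with
  | nil => intro _ hp; simp [← hp]
  | cons g t iht =>
    intro hg hp
    rw [List.reverse_cons, List.prod_append, List.prod_singleton,
      iht t.prod (fun a ha => hg a (List.mem_cons_of_mem _ ha)) rfl, ← hp]
    rw [List.prod_cons, mul_inv_rev]
    congr 1
    exact (inv_eq_of_mul_eq_one_right (sGen_mul_self (hg g List.mem_cons_self))).symm

lemma exists_word (hz : z ∈ WGrp r) :
    ∃ l : List (Equiv.Perm ℤ), (∀ g ∈ l, g ∈ sGen r) ∧ l.prod = z := by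
  induction hz using Subgroup.closure_induction with
  | mem g hg => exact ⟨[g], by simpa using hg, by simp⟩
  | one => exact ⟨[], by simp, rfl⟩
  | mul u v hu hv pu pv =>
      obtain ⟨l1, h1, hp1⟩ := pu
      obtain ⟨l2, h2, hp2⟩ := pv
      refine ⟨l1 ++ l2, fun g hg => ?_, by rw [List.prod_append, hp1, hp2]⟩
      rcases List.mem_append.mp hg with h | h
      · exact h1 g h
      · exact h2 g h
  | inv u hu pu =>
      obtain ⟨l, h1, hp1⟩ := pu
      exact ⟨l.reverse, fun g hg => h1 g (List.mem_reverse.mp hg),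
        word_reverse u l h1 hp1⟩

lemma word_mem_WGrp {l : List (Equiv.Perm ℤ)} (h : ∀ g ∈ l, g ∈ sGen r) :
    l.prod ∈ WGrp r :=
  list_prod_mem (fun g hg => Subgroup.subset_closure (h g hg))

lemma lenW_le {l : List (Equiv.Perm ℤ)} (h : ∀ g ∈ l, g ∈ sGen r) (hp : l.prod = z) :
    lenW r z ≤ l.length :=
  Nat.sInf_le ⟨l, rfl, h, hp⟩

lemma lenW_spec (hz : z ∈ WGrp r) :
    ∃ l : List (Equiv.Perm ℤ), (∀ g ∈ l, g ∈ sGen r) ∧ l.prod = z ∧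
      l.length = lenW r z := by
  obtain ⟨l0, h0, hp0⟩ := exists_word hz
  have hne : {m | ∃ l : List (Equiv.Perm ℤ), l.length = m ∧ (∀ s ∈ l, s ∈ sGen r)
      ∧ l.prod = z}.Nonempty := ⟨l0.length, l0, rfl, h0, hp0⟩
  have hmem := Nat.sInf_mem hne
  obtain ⟨l, hl1, hl2, hl3⟩ := hmem
  exact ⟨l, hl2, hl3, hl1⟩

lemma inv_le_word (hr2 : 2 ≤ r) : ∀ l : List (Equiv.Perm ℤ),
    (∀ g ∈ l, g ∈ sGen r) → invW r l.prod ≤ l.length := by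
  intro l
  induction l using List.reverseRecOn with
  | nil => intro _; simp [invW_one]
  | append_singleton l g ihl =>
    intro h
    have hl : ∀ g ∈ l, g ∈ sGen r := fun g hg => h g (by simp [hg])
    obtain ⟨i, h1, h2, hgi⟩ := h g (by simp)
    have haff : l.prod ∈ AffSym r := WGrp_le_aff (word_mem_WGrp hl)
    have hle := invW_gen_le hr2 haff i
    have := ihl hl
    rw [List.prod_append, List.prod_singleton, hgi]
    simp only [List.length_append, List.length_singleton]
    omega

lemma lenW_le_invW (hr2 : 2 ≤ r) : ∀ n : ℕ, ∀ z : Equiv.Perm ℤ, z ∈ WGrp r →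
    invW r z = n → lenW r z ≤ n := by
  intro n
  induction n using Nat.strong_induction_on with
  | _ n ih =>
  intro z hz hn
  have hr : 1 ≤ r := by omega
  by_cases hdesc : ∃ α, 1 ≤ α ∧ α ≤ (r:ℤ) ∧ z (α+1) < z α
  · obtain ⟨α, h1, h2, hd⟩ := hdesc
    have haff := WGrp_le_aff hz
    have heq := invW_gen_lt hr2 haff α hd
    have hmem : z * tPerm r α (α+1) ∈ WGrp r :=
      mul_mem hz (Subgroup.subset_closure ⟨α, h1, h2, rfl⟩)
    have hlt : invW r (z * tPerm r α (α+1)) < n := by omega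
    have hih := ih _ hlt _ hmem rfl
    obtain ⟨l, hg, hp, hlen⟩ := lenW_spec hmem
    have hp2 : (l ++ [tPerm r α (α+1)]).prod = z := by
      rw [List.prod_append, List.prod_singleton, hp, mul_assoc, tPerm_mul_self, mul_one]
    have hle := lenW_le (l := l ++ [tPerm r α (α+1)]) (fun g hg2 => by
      rcases List.mem_append.mp hg2 with h9 | h9
      · exact hg g h9
      · rw [List.mem_singleton.mp h9]
        exact ⟨α, h1, h2, rfl⟩) hp2
    simp only [List.length_append, List.length_singleton] at hle
    omega
  · push_neg at hdesc
    have hz1 : z = 1 := by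
      refine no_descent_eq_one hr hz (fun α h1 h2 => ?_)
      have h3 := hdesc α h1 h2
      have h4 : z α ≠ z (α+1) := fun he => by
        have := z.injective he; omega
      omega
    subst hz1
    have : lenW r (1 : Equiv.Perm ℤ) ≤ 0 := lenW_le (l := []) (by simp) (by simp)
    omega

lemma lenW_eq_invW (hr2 : 2 ≤ r) (hz : z ∈ WGrp r) : lenW r z = invW r z := by
  apply le_antisymm
  · exact lenW_le_invW hr2 _ z hz rfl
  · obtain ⟨l, hg, hp, hlen⟩ := lenW_spec hz
    have := inv_le_word hr2 l hg
    rw [hp] at this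
    omega

lemma lenW_inv_eq (z : Equiv.Perm ℤ) : lenW r z⁻¹ = lenW r z := by
  have key := word_reverse (r := r)
  have hset : {m | ∃ l : List (Equiv.Perm ℤ), l.length = m ∧ (∀ s ∈ l, s ∈ sGen r)
      ∧ l.prod = z⁻¹}
      = {m | ∃ l : List (Equiv.Perm ℤ), l.length = m ∧ (∀ s ∈ l, s ∈ sGen r)
      ∧ l.prod = z} := by
    ext m
    constructor
    · rintro ⟨l, h1, h2, h3⟩
      exact ⟨l.reverse, by simp [h1], fun g hg => h2 g (List.mem_reverse.mp hg), by
        have h9 := key z⁻¹ l h2 h3; simpa using h9⟩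
    · rintro ⟨l, h1, h2, h3⟩
      exact ⟨l.reverse, by simp [h1], fun g hg => h2 g (List.mem_reverse.mp hg),
        key z l h2 h3⟩
  unfold lenW
  rw [hset]

end AuxLen
section AuxReflLen

variable {r : ℕ}

lemma invC (hr : 1 ≤ r) : ∀ n : ℕ, ∀ (z : Equiv.Perm ℤ) (i j : ℤ), z ∈ AffSym r →
    i < j → j - i = (n:ℤ) → ¬ (r:ℤ) ∣ (j - i) → z j < z i →
    invW r (z * tPerm r i j) + 1 ≤ invW r z := by
  intro n
  induction n using Nat.strong_induction_on with
  | _ n ih =>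
  intro z i j hz hij hn hnd hzij
  have hr2 : 2 ≤ r := hr2_of_ndvd hr hnd
  by_cases hbase : j = i + 1
  · subst hbase
    have := invW_gen_lt hr2 hz i hzij
    omega
  · have hj2 : i + 2 ≤ j := by omega
    by_cases hdd : (r:ℤ) ∣ (j - 1 - i)
    · -- divisible case : j - 1 ≡ i (mod r)
      have h3 : i + 3 ≤ j := by rcases mult_cases hr2 hdd with h | h | h <;> omega
      have hnd2 : ¬ (r:ℤ) ∣ (j - 1 - (i+1)) := by
        intro hx
        have h9 := hdd.sub hx
        have h1 : (r:ℤ) ∣ 1 := by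
          simpa [show j - 1 - i - (j - 1 - (i+1)) = 1 by ring] using h9
        have := Int.le_of_dvd one_pos h1
        omega
      have hBC : z j - z (i+1) = j - (i+1) :=
        aff_pair hz (by simpa [show j - (i+1) = j - 1 - i by ring] using hdd)
      have hAC : z (i+1) < z i := by omega
      have e1 := invW_gen_lt hr2 hz i hAC
      have huaff : z * tPerm r i (i+1) ∈ AffSym r := mul_mem hz (tPerm_mem_aff _ _)
      have hui1 : (z * tPerm r i (i+1)) (i+1) = z i := by
        simp only [Equiv.Perm.mul_apply]
        rw [tPerm_apply_right (ndvd_one' hr2) (by simp)]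
        norm_num
      have huj1 : (z * tPerm r i (i+1)) (j-1) = z j := by
        simp only [Equiv.Perm.mul_apply]
        rw [gen_apply_m hr2 hdd, show j - 1 + 1 = j by ring]
      have hIH := ih (n-2) (by omega) (z * tPerm r i (i+1)) (i+1) (j-1) huaff
        (by omega) (by push_cast; omega) hnd2 (by rw [hui1, huj1]; exact hzij)
      have hkey : tPerm r i (i+1) * tPerm r (i+1) (j-1) * (tPerm r i (i+1))⁻¹
          = tPerm r i j := by
        rw [conj_tPerm (tPerm_mem_aff i (i+1)) (i+1) (j-1)]
        have e1' : tPerm r i (i+1) (i+1) = i := by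
          rw [tPerm_apply_right (ndvd_one' hr2) (by simp)]; ring
        have e2' : tPerm r i (i+1) (j-1) = j := by
          rw [gen_apply_m hr2 hdd]; ring
        rw [e1', e2']
      have hkey2 : tPerm r i (i+1) * tPerm r (i+1) (j-1) * tPerm r i (i+1)
          = tPerm r i j := by
        have hkey' := hkey
        rw [tPerm_inv] at hkey'
        exact hkey'
      have hfin : z * tPerm r i j
          = ((z * tPerm r i (i+1)) * tPerm r (i+1) (j-1)) * tPerm r i (i+1) := by
        rw [← hkey2]
        simp [mul_assoc]
      have hle3 := invW_gen_le hr2 (mul_mem huaff (tPerm_mem_aff (i+1) (j-1))) i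
      rw [hfin]
      omega
    · -- nondivisible case
      have hnd1 : ¬ (r:ℤ) ∣ (j - (j-1)) := by
        intro hx
        have h1 : (r:ℤ) ∣ 1 := by simpa using hx
        have := Int.le_of_dvd one_pos h1
        omega
      have hsj : tPerm r (j-1) (j-1+1) = tPerm r (j-1) j := by norm_num
      have hsi : tPerm r (j-1) j i = i := by
        refine tPerm_apply_other hnd1 ?_ ?_
        · intro hx
          exact hdd (by
            have h9 := dvd_neg.mpr hx
            simpa [show -(i - (j-1)) = j - 1 - i by ring] using h9)
        · intro hx
          exact hnd (by
            have h9 := dvd_neg.mpr hx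
            simpa [show -(i - j) = j - i by ring] using h9)
      have hsj1 : tPerm r (j-1) j (j-1) = j := by
        rw [tPerm_apply_left hnd1 (by simp)]; ring
      have hsjj : tPerm r (j-1) j j = j - 1 := by
        rw [tPerm_apply_right hnd1 (by simp)]; ring
      have huaff : z * tPerm r (j-1) j ∈ AffSym r := mul_mem hz (tPerm_mem_aff _ _)
      have hui : (z * tPerm r (j-1) j) i = z i := by
        simp only [Equiv.Perm.mul_apply, hsi]
      have huj1 : (z * tPerm r (j-1) j) (j-1) = z j := by
        simp only [Equiv.Perm.mul_apply, hsj1]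
      have huj : (z * tPerm r (j-1) j) j = z (j-1) := by
        simp only [Equiv.Perm.mul_apply, hsjj]
      have hIH := ih (n-1) (by omega) (z * tPerm r (j-1) j) i (j-1) huaff
        (by omega) (by push_cast; omega) hdd (by rw [hui, huj1]; exact hzij)
      have hvaff : (z * tPerm r (j-1) j) * tPerm r i (j-1) ∈ AffSym r :=
        mul_mem huaff (tPerm_mem_aff _ _)
      have htj1 : tPerm r i (j-1) (j-1) = i := by
        rw [tPerm_apply_right hdd (by simp)]; ring
      have htjj : tPerm r i (j-1) j = j := by
        refine tPerm_apply_other hdd ?_ ?_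
        · intro hx
          exact hnd (by simpa using hx)
        · intro hx
          exact hnd1 (by
            have h9 : (r:ℤ) ∣ 1 := by simpa [show j - (j-1) = 1 by ring] using hx
            simpa [show j - (j-1) = 1 by ring] using h9)
      have hvj1 : ((z * tPerm r (j-1) j) * tPerm r i (j-1)) (j-1) = z i := by
        simp only [Equiv.Perm.mul_apply, htj1, hsi]
      have hvj : ((z * tPerm r (j-1) j) * tPerm r i (j-1)) j = z (j-1) := by
        simp only [Equiv.Perm.mul_apply, htjj, hsjj]
      have hkey : tPerm r (j-1) j * tPerm r i (j-1) * (tPerm r (j-1) j)⁻¹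
          = tPerm r i j := by
        rw [conj_tPerm (tPerm_mem_aff (j-1) j) i (j-1)]
        rw [hsi, hsj1]
      have hkey2 : tPerm r (j-1) j * tPerm r i (j-1) * tPerm r (j-1) j
          = tPerm r i j := by
        have hkey' := hkey
        rw [tPerm_inv] at hkey'
        exact hkey'
      have hfin : z * tPerm r i j
          = ((z * tPerm r (j-1) j) * tPerm r i (j-1)) * tPerm r (j-1) j := by
        rw [← hkey2]
        simp [mul_assoc]
      rcases lt_trichotomy (z (j-1)) (z j) with hCB | hCB | hCB
      · have e1 : invW r (z * tPerm r (j-1) (j-1+1)) = invW r z + 1 :=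
          invW_gen_gt hr2 hz (j-1) (by rw [show j-1+1 = j by ring]; exact hCB)
        rw [hsj] at e1
        have e3 : invW r (((z * tPerm r (j-1) j) * tPerm r i (j-1))
              * tPerm r (j-1) (j-1+1)) + 1
            = invW r ((z * tPerm r (j-1) j) * tPerm r i (j-1)) := by
          refine invW_gen_lt hr2 hvaff (j-1) ?_
          rw [show j-1+1 = j by ring, hvj, hvj1]
          omega
        rw [hsj] at e3
        rw [hfin]
        omega
      · exact absurd (z.injective hCB) (by omega)
      · have e1 : invW r (z * tPerm r (j-1) (j-1+1)) + 1 = invW r z :=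
          invW_gen_lt hr2 hz (j-1) (by rw [show j-1+1 = j by ring]; exact hCB)
        rw [hsj] at e1
        have e3 := invW_gen_le hr2 hvaff (j-1)
        rw [hsj] at e3
        rw [hfin]
        omega

end AuxReflLen
section AuxStep

variable {r : ℕ}

lemma step_counts (hr : 1 ≤ r) {x : Equiv.Perm ℤ} (hx : x ∈ AffSym r) {i j : ℤ}
    (hij : i < j) (hnd : ¬ (r:ℤ) ∣ (j - i))
    (hlen : lenW r x < lenW r (tPerm r i j * x)) :
    (∀ I T : ℤ, {s : ℤ | s ≤ I ∧ T < x s}.ncard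
        ≤ {s : ℤ | s ≤ I ∧ T < (tPerm r i j * x) s}.ncard) ∧
    (∀ I T : ℤ, {s : ℤ | I ≤ s ∧ x s < T}.ncard
        ≤ {s : ℤ | I ≤ s ∧ (tPerm r i j * x) s < T}.ncard) := by
  have hr2 : 2 ≤ r := hr2_of_ndvd hr hnd
  have htmem : tPerm r i j ∈ WGrp r :=
    refl_mem_WGrp hr (j - i).toNat i j hij (by omega) hnd
  have hxW : x ∈ WGrp r := by
    have hpos : 0 < lenW r (tPerm r i j * x) := by omega
    have hne : {m | ∃ l : List (Equiv.Perm ℤ), l.length = m ∧ (∀ s ∈ l, s ∈ sGen r)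
        ∧ l.prod = tPerm r i j * x}.Nonempty := by
      by_contra hcon
      rw [Set.not_nonempty_iff_eq_empty] at hcon
      unfold lenW at hpos
      rw [hcon] at hpos
      simp at hpos
    obtain ⟨m, l, hl1, hl2, hl3⟩ := hne
    have h9 : tPerm r i j * x ∈ WGrp r := hl3 ▸ word_mem_WGrp hl2
    have h10 := mul_mem (inv_mem htmem) h9
    have h11 : (tPerm r i j)⁻¹ * (tPerm r i j * x) = x := by group
    rwa [h11] at h10
  have hxp : x (x⁻¹ i) = i := x.apply_symm_apply i
  have hxq : x (x⁻¹ j) = j := x.apply_symm_apply j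
  have hpq : x⁻¹ i < x⁻¹ j := by
    rcases lt_trichotomy (x⁻¹ i) (x⁻¹ j) with h | h | h
    · exact h
    · have h9 := congrArg x h
      rw [hxp, hxq] at h9
      omega
    · exfalso
      have hzmem : x⁻¹ ∈ WGrp r := inv_mem hxW
      have hzaff : x⁻¹ ∈ AffSym r := WGrp_le_aff hzmem
      have hC := invC hr (j - i).toNat x⁻¹ i j hzaff hij (by omega) hnd h
      have hL1 : lenW r (x⁻¹ * tPerm r i j) = invW r (x⁻¹ * tPerm r i j) :=
        lenW_eq_invW hr2 (mul_mem hzmem htmem)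
      have hL2 : lenW r x⁻¹ = invW r x⁻¹ := lenW_eq_invW hr2 hzmem
      have hE1 : lenW r (x⁻¹ * tPerm r i j) = lenW r (tPerm r i j * x) := by
        rw [← lenW_inv_eq (tPerm r i j * x), mul_inv_rev, tPerm_inv]
      have hE2 : lenW r x⁻¹ = lenW r x := lenW_inv_eq x
      omega
  have hval_p : ∀ s : ℤ, (r:ℤ) ∣ (s - x⁻¹ i) → x s = i + (s - x⁻¹ i) := by
    intro s hd
    have h9 := aff_pair hx (a := x⁻¹ i) (b := s) hd
    rw [hxp] at h9
    omega
  have hval_q : ∀ s : ℤ, (r:ℤ) ∣ (s - x⁻¹ j) → x s = j + (s - x⁻¹ j) := by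
    intro s hd
    have h9 := aff_pair hx (a := x⁻¹ j) (b := s) hd
    rw [hxq] at h9
    omega
  have htx_p : ∀ s : ℤ, (r:ℤ) ∣ (s - x⁻¹ i)
      → (tPerm r i j * x) s = j + (s - x⁻¹ i) := by
    intro s hd
    simp only [Equiv.Perm.mul_apply]
    have h1 := hval_p s hd
    have h2 : (r:ℤ) ∣ (x s - i) := by
      rw [h1, show i + (s - x⁻¹ i) - i = s - x⁻¹ i by ring]
      exact hd
    rw [tPerm_apply_left hnd h2, h1]
    ring
  have htx_q : ∀ s : ℤ, (r:ℤ) ∣ (s - x⁻¹ j)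
      → (tPerm r i j * x) s = i + (s - x⁻¹ j) := by
    intro s hd
    simp only [Equiv.Perm.mul_apply]
    have h1 := hval_q s hd
    have h2 : (r:ℤ) ∣ (x s - j) := by
      rw [h1, show j + (s - x⁻¹ j) - j = s - x⁻¹ j by ring]
      exact hd
    rw [tPerm_apply_right hnd h2, h1]
    ring
  have htx_o : ∀ s : ℤ, ¬ (r:ℤ) ∣ (s - x⁻¹ i) → ¬ (r:ℤ) ∣ (s - x⁻¹ j)
      → (tPerm r i j * x) s = x s := by
    intro s hd1 hd2
    simp only [Equiv.Perm.mul_apply]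
    refine tPerm_apply_other hnd ?_ ?_
    · intro hcc
      refine hd1 ?_
      have h9 := (aff_dvd_iff hx (a := s) (b := x⁻¹ i)).mp (by rw [hxp]; exact hcc)
      exact h9
    · intro hcc
      refine hd2 ?_
      exact (aff_dvd_iff hx (a := s) (b := x⁻¹ j)).mp (by rw [hxq]; exact hcc)
  constructor
  · intro I T
    have hfin2 : {s : ℤ | s ≤ I ∧ T < (tPerm r i j * x) s}.Finite :=
      finA hr (mul_mem (tPerm_mem_aff i j) hx) I T
    apply Set.ncard_le_ncard_of_injOn
      (fun s => if (r:ℤ) ∣ (s - x⁻¹ j) ∧ i + (s - x⁻¹ j) ≤ T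
        then s - (x⁻¹ j - x⁻¹ i) else s) ?_ ?_ hfin2
    · rintro s ⟨hs1, hs2⟩
      by_cases hq : (r:ℤ) ∣ (s - x⁻¹ j)
      · by_cases hc : i + (s - x⁻¹ j) ≤ T
        · simp only [if_pos (And.intro hq hc), Set.mem_setOf_eq]
          refine ⟨by omega, ?_⟩
          have hd2 : (r:ℤ) ∣ (s - (x⁻¹ j - x⁻¹ i) - x⁻¹ i) := by
            rw [show s - (x⁻¹ j - x⁻¹ i) - x⁻¹ i = s - x⁻¹ j by ring]
            exact hq
          rw [htx_p _ hd2]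
          have h1 := hval_q s hq
          omega
        · simp only [if_neg (fun hcc : _ ∧ _ => hc hcc.2), Set.mem_setOf_eq]
          refine ⟨hs1, ?_⟩
          rw [htx_q s hq]
          omega
      · simp only [if_neg (fun hcc : _ ∧ _ => hq hcc.1), Set.mem_setOf_eq]
        refine ⟨hs1, ?_⟩
        by_cases hp2 : (r:ℤ) ∣ (s - x⁻¹ i)
        · rw [htx_p s hp2]
          have h1 := hval_p s hp2
          omega
        · rw [htx_o s hp2 hq]
          exact hs2
    · rintro s1 ⟨hs11, hs12⟩ s2 ⟨hs21, hs22⟩ he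
      simp only at he
      by_cases hc1 : (r:ℤ) ∣ (s1 - x⁻¹ j) ∧ i + (s1 - x⁻¹ j) ≤ T
        <;> by_cases hc2 : (r:ℤ) ∣ (s2 - x⁻¹ j) ∧ i + (s2 - x⁻¹ j) ≤ T
      · rw [if_pos hc1, if_pos hc2] at he; omega
      · rw [if_pos hc1, if_neg hc2] at he
        exfalso
        have hd2 : (r:ℤ) ∣ (s2 - x⁻¹ i) := by
          rw [← he, show s1 - (x⁻¹ j - x⁻¹ i) - x⁻¹ i = s1 - x⁻¹ j by ring]
          exact hc1.1
        have h1 := hval_p s2 hd2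
        have hc12 := hc1.2
        omega
      · rw [if_neg hc1, if_pos hc2] at he
        exfalso
        have hd2 : (r:ℤ) ∣ (s1 - x⁻¹ i) := by
          rw [he, show s2 - (x⁻¹ j - x⁻¹ i) - x⁻¹ i = s2 - x⁻¹ j by ring]
          exact hc2.1
        have h1 := hval_p s1 hd2
        have hc22 := hc2.2
        omega
      · rw [if_neg hc1, if_neg hc2] at he; exact he
  · intro I T
    have hfin2 : {s : ℤ | I ≤ s ∧ (tPerm r i j * x) s < T}.Finite :=
      finB hr (mul_mem (tPerm_mem_aff i j) hx) I T
    apply Set.ncard_le_ncard_of_injOn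
      (fun s => if (r:ℤ) ∣ (s - x⁻¹ i) ∧ T ≤ j + (s - x⁻¹ i)
        then s + (x⁻¹ j - x⁻¹ i) else s) ?_ ?_ hfin2
    · rintro s ⟨hs1, hs2⟩
      by_cases hp2 : (r:ℤ) ∣ (s - x⁻¹ i)
      · by_cases hc : T ≤ j + (s - x⁻¹ i)
        · simp only [if_pos (And.intro hp2 hc), Set.mem_setOf_eq]
          refine ⟨by omega, ?_⟩
          have hd2 : (r:ℤ) ∣ (s + (x⁻¹ j - x⁻¹ i) - x⁻¹ j) := by
            rw [show s + (x⁻¹ j - x⁻¹ i) - x⁻¹ j = s - x⁻¹ i by ring]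
            exact hp2
          rw [htx_q _ hd2]
          have h1 := hval_p s hp2
          omega
        · simp only [if_neg (fun hcc : _ ∧ _ => hc hcc.2), Set.mem_setOf_eq]
          refine ⟨hs1, ?_⟩
          rw [htx_p s hp2]
          omega
      · simp only [if_neg (fun hcc : _ ∧ _ => hp2 hcc.1), Set.mem_setOf_eq]
        refine ⟨hs1, ?_⟩
        by_cases hq : (r:ℤ) ∣ (s - x⁻¹ j)
        · rw [htx_q s hq]
          have h1 := hval_q s hq
          omega
        · rw [htx_o s hp2 hq]
          exact hs2
    · rintro s1 ⟨hs11, hs12⟩ s2 ⟨hs21, hs22⟩ he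
      simp only at he
      by_cases hc1 : (r:ℤ) ∣ (s1 - x⁻¹ i) ∧ T ≤ j + (s1 - x⁻¹ i)
        <;> by_cases hc2 : (r:ℤ) ∣ (s2 - x⁻¹ i) ∧ T ≤ j + (s2 - x⁻¹ i)
      · rw [if_pos hc1, if_pos hc2] at he; omega
      · rw [if_pos hc1, if_neg hc2] at he
        exfalso
        have hd2 : (r:ℤ) ∣ (s2 - x⁻¹ j) := by
          rw [← he, show s1 + (x⁻¹ j - x⁻¹ i) - x⁻¹ j = s1 - x⁻¹ i by ring]
          exact hc1.1
        have h1 := hval_q s2 hd2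
        have hc12 := hc1.2
        omega
      · rw [if_neg hc1, if_pos hc2] at he
        exfalso
        have hd2 : (r:ℤ) ∣ (s1 - x⁻¹ j) := by
          rw [he, show s2 + (x⁻¹ j - x⁻¹ i) - x⁻¹ j = s2 - x⁻¹ i by ring]
          exact hc2.1
        have h1 := hval_q s1 hd2
        have hc22 := hc2.2
        omega
      · rw [if_neg hc1, if_neg hc2] at he; exact he

end AuxStep
section AuxMain

variable {r : ℕ}

lemma TSet_sub_aff {t : Equiv.Perm ℤ} (ht : t ∈ TSet r) : t ∈ AffSym r := by
  obtain ⟨i, j, _, _, rfl⟩ := ht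
  exact tPerm_mem_aff i j

lemma rho_mem_aff : rhoP ∈ AffSym r := by
  intro k
  simp only [rhoP, Equiv.coe_addRight]
  ring

lemma rho_zpow (c : ℤ) : ∀ k : ℤ, (rhoP ^ c) k = k + c := by
  induction c using Int.induction_on with
  | zero => intro k; simp
  | succ n ihn =>
      intro k
      rw [zpow_add_one]
      simp only [Equiv.Perm.mul_apply, rhoP, Equiv.coe_addRight]
      rw [show ((rhoP : Equiv.Perm ℤ) ^ (n:ℤ)) = rhoP ^ (n:ℤ) from rfl] at ihn
      have := ihn (k + 1)
      simp only [rhoP, Equiv.coe_addRight] at this ⊢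
      omega
  | pred n ihn =>
      intro k
      rw [show -(n:ℤ) - 1 = -(n:ℤ) + -1 by ring, zpow_add, zpow_neg_one]
      simp only [Equiv.Perm.mul_apply]
      have h1 : (rhoP⁻¹ : Equiv.Perm ℤ) k = k - 1 := by
        simp [rhoP, sub_eq_add_neg]
      rw [h1, ihn (k-1)]
      omega

lemma counts_chain (hr : 1 ≤ r) : ∀ l : List (Equiv.Perm ℤ), ∀ y' : Equiv.Perm ℤ,
    y' ∈ AffSym r → (∀ t ∈ l, t ∈ TSet r) →
    (∀ k, k < l.length →
      lenW r ((l.drop (k+1)).prod * y') < lenW r ((l.drop k).prod * y')) →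
    (∀ I T : ℤ, {s : ℤ | s ≤ I ∧ T < y' s}.ncard
        ≤ {s : ℤ | s ≤ I ∧ T < (l.prod * y') s}.ncard) ∧
    (∀ I T : ℤ, {s : ℤ | I ≤ s ∧ y' s < T}.ncard
        ≤ {s : ℤ | I ≤ s ∧ (l.prod * y') s < T}.ncard) := by
  intro l
  induction l with
  | nil =>
      intro y' hy' _ _
      constructor <;> intro I T <;> rw [List.prod_nil, one_mul]
  | cons t l' ihl =>
      intro y' hy' hT hlen
      obtain ⟨i, j, hij, hnd, htval⟩ := hT t List.mem_cons_self
      have hT' : ∀ g ∈ l', g ∈ TSet r := fun g hg => hT g (List.mem_cons_of_mem _ hg)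
      have hlen' : ∀ k, k < l'.length →
          lenW r ((l'.drop (k+1)).prod * y') < lenW r ((l'.drop k).prod * y') := by
        intro k hk
        have h9 := hlen (k+1) (by simp; omega)
        simpa [List.drop_succ_cons] using h9
      have hih := ihl y' hy' hT' hlen'
      have hx : l'.prod * y' ∈ AffSym r :=
        mul_mem (list_prod_mem (fun g hg => TSet_sub_aff (hT' g hg))) hy'
      have h0 := hlen 0 (by simp)
      have h0' : lenW r (l'.prod * y')
          < lenW r (tPerm r i j * (l'.prod * y')) := by
        have e1 : (t :: l').drop 1 = l' := rfl
        have e2 : (t :: l').drop 0 = t :: l' := rfl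
        rw [e1, e2, List.prod_cons, mul_assoc, htval] at h0
        exact h0
      have hstep := step_counts hr hx hij hnd h0'
      constructor
      · intro I T
        refine le_trans (hih.1 I T) ?_
        have h9 := hstep.1 I T
        rw [List.prod_cons, mul_assoc, htval]
        exact h9
      · intro I T
        refine le_trans (hih.2 I T) ?_
        have h9 := hstep.2 I T
        rw [List.prod_cons, mul_assoc, htval]
        exact h9

end AuxMain

/-- if `y ≤ w` in the Bruhat order on `𝔖_{Δ,r}` then for all `i, t ∈ ℤ`,
`#{s ≤ i | y(s) > t} ≤ #{s ≤ i | w(s) > t}` (equivalently the nondecreasing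
rearrangement of `(y(s))_{s≤i}` is entrywise `≤` that of `(w(s))_{s≤i}`), and
`#{s ≥ i | y(s) < t} ≤ #{s ≥ i | w(s) < t}`. -/
theorem sorted_dominance_of_bruhat_le (r : ℕ) (hr : 1 ≤ r)
    (y w : Equiv.Perm ℤ) (hy : y ∈ AffSym r) (hw : w ∈ AffSym r)
    (hle : abruhatLE r y w) :
    (∀ i t : ℤ, {s : ℤ | s ≤ i ∧ t < y s}.ncard ≤ {s : ℤ | s ≤ i ∧ t < w s}.ncard) ∧
    (∀ i t : ℤ, {s : ℤ | i ≤ s ∧ y s < t}.ncard ≤ {s : ℤ | i ≤ s ∧ w s < t}.ncard) := by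
  obtain ⟨hsh, hbr⟩ := hle
  rw [← hsh] at hbr
  obtain ⟨l, hlT, hprod, hlen⟩ := hbr
  have hy' : (rhoP ^ shiftIdx r y)⁻¹ * y ∈ AffSym r :=
    mul_mem (inv_mem (zpow_mem rho_mem_aff _)) hy
  have hchain := counts_chain hr l _ hy' hlT hlen
  rw [← hprod] at hchain
  have hyv : ∀ s : ℤ, ((rhoP ^ shiftIdx r y)⁻¹ * y) s = y s - shiftIdx r y := by
    intro s
    simp only [Equiv.Perm.mul_apply]
    rw [show ((rhoP ^ shiftIdx r y)⁻¹ : Equiv.Perm ℤ) = rhoP ^ (-(shiftIdx r y)) by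
      rw [zpow_neg], rho_zpow]
    ring
  have hwv : ∀ s : ℤ, ((rhoP ^ shiftIdx r y)⁻¹ * w) s = w s - shiftIdx r y := by
    intro s
    simp only [Equiv.Perm.mul_apply]
    rw [show ((rhoP ^ shiftIdx r y)⁻¹ : Equiv.Perm ℤ) = rhoP ^ (-(shiftIdx r y)) by
      rw [zpow_neg], rho_zpow]
    ring
  constructor
  · intro I T
    have h1 := hchain.1 I (T - shiftIdx r y)
    have e1 : {s : ℤ | s ≤ I ∧ T - shiftIdx r y < ((rhoP ^ shiftIdx r y)⁻¹ * y) s}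
        = {s : ℤ | s ≤ I ∧ T < y s} := by
      ext s
      simp only [Set.mem_setOf_eq, hyv]
      constructor <;> (rintro ⟨u1, u2⟩; exact ⟨u1, by omega⟩)
    have e2 : {s : ℤ | s ≤ I ∧ T - shiftIdx r y < ((rhoP ^ shiftIdx r y)⁻¹ * w) s}
        = {s : ℤ | s ≤ I ∧ T < w s} := by
      ext s
      simp only [Set.mem_setOf_eq, hwv]
      constructor <;> (rintro ⟨u1, u2⟩; exact ⟨u1, by omega⟩)
    rw [e1, e2] at h1
    exact h1
  · intro I T
    have h1 := hchain.2 I (T - shiftIdx r y)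
    have e1 : {s : ℤ | I ≤ s ∧ ((rhoP ^ shiftIdx r y)⁻¹ * y) s < T - shiftIdx r y}
        = {s : ℤ | I ≤ s ∧ y s < T} := by
      ext s
      simp only [Set.mem_setOf_eq, hyv]
      constructor <;> (rintro ⟨u1, u2⟩; exact ⟨u1, by omega⟩)
    have e2 : {s : ℤ | I ≤ s ∧ ((rhoP ^ shiftIdx r y)⁻¹ * w) s < T - shiftIdx r y}
        = {s : ℤ | I ≤ s ∧ w s < T} := by
      ext s
      simp only [Set.mem_setOf_eq, hwv]
      constructor <;> (rintro ⟨u1, u2⟩; exact ⟨u1, by omega⟩)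
    rw [e1, e2] at h1
    exact h1
end

section
/- Let 𝔽 be a field, let V be the free 𝔽[ε,ε^{−1}]-module with basis v_1, …, v_r, and set v_{i+kr} = ε^{−k} v_i for 1 ≤ i ≤ r and k ∈ ℤ. Let λ, μ ∈ Λ_Δ(n,r), d ∈ D^Δ_{λ,μ} and A = (a_{i,j}) = J_Δ(λ,d,μ). For 1 ≤ i ≤ n and k ∈ ℤ define the 𝔽-subspaces L_{i+kn} = span_𝔽{v_a | a ∈ ℤ, a ≤ Σ_{1≤j≤i} λ_j + kr} and L'_{i+kn} = span_𝔽{v_{d(a)} | a ∈ ℤ, a ≤ Σ_{1≤j≤i} μ_j + kr} of V. Then for all i, j ∈ ℤ, dim_𝔽 (L_i ∩ L'_j)/(L_{i−1} ∩ L'_j + L_i ∩ L'_{j−1}) = a_{i,j}. -/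
open scoped Classical

noncomputable section AuxProof

variable {F : Type*} [Field F] {M : Type*} [AddCommGroup M] [Module F M] {ι : Type*}

lemma span_inf (B : Module.Basis ι F M) (s t : Set ι) :
    Submodule.span F (B '' s) ⊓ Submodule.span F (B '' t) = Submodule.span F (B '' (s ∩ t)) := by
  ext x
  simp only [Submodule.mem_inf, B.mem_span_image, Set.subset_inter_iff]

lemma aux_finrank (B : Module.Basis ι F M) {u w : Set ι} (hw : w ⊆ u) (hfin : (u \ w).Finite) :
    Module.finrank F ((Submodule.span F (B '' u)) ⧸
      (Submodule.comap (Submodule.span F (B '' u)).subtype (Submodule.span F (B '' w))))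
      = (u \ w).ncard := by
  clear hw
  haveI := hfin.fintype
  set P := Submodule.span F (B '' u) with hP
  let g : P →ₗ[F] (↥(u \ w) → F) :=
    (LinearMap.pi fun i : ↥(u \ w) => B.coord (i : ι)) ∘ₗ P.subtype
  have hg : ∀ (x : P) (i : ↥(u \ w)), g x i = B.repr (x : M) (i : ι) := by
    intro x i
    simp [g, Module.Basis.coord_apply]
  have hker : LinearMap.ker g = Submodule.comap P.subtype (Submodule.span F (B '' w)) := by
    ext x
    have hxu : ((B.repr (x : M)).support : Set ι) ⊆ u := B.mem_span_image.1 x.2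
    simp only [LinearMap.mem_ker, Submodule.mem_comap, Submodule.subtype_apply, B.mem_span_image]
    constructor
    · intro h i hi
      by_contra hiw
      have h0 : B.repr (x : M) i = 0 := by
        have h1 := congrFun h ⟨i, hxu hi, hiw⟩
        rw [hg] at h1
        exact h1
      exact Finsupp.mem_support_iff.1 (Finset.mem_coe.1 hi) h0
    · intro h
      funext i
      show g x i = 0
      rw [hg]
      by_contra h0
      exact i.2.2 (h (Finset.mem_coe.2 (Finsupp.mem_support_iff.2 h0)))
  have hsurj : Function.Surjective g := by
    rw [← LinearMap.range_eq_top, eq_top_iff, ← (Pi.basisFun F ↥(u \ w)).span_eq,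
      Submodule.span_le]
    rintro _ ⟨i, rfl⟩
    rw [Pi.basisFun_apply]
    refine ⟨⟨B (i : ι), Submodule.subset_span ⟨(i : ι), i.2.1, rfl⟩⟩, ?_⟩
    funext j
    rw [hg]
    simp only [Module.Basis.repr_self, Finsupp.single_apply, Pi.single_apply]
    by_cases hij : j = i
    · subst hij; simp
    · rw [if_neg (fun hc => hij (Subtype.ext hc.symm)), if_neg hij]
  have e1 := (g.quotKerEquivOfSurjective hsurj).finrank_eq
  rw [hker] at e1
  rw [e1, Module.finrank_fintype_fun_eq_card, ← Nat.card_coe_set_eq,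
    Nat.card_eq_fintype_card]

-- index equivalence
def idxEquiv (r : ℕ) (hr : 0 < r) : ℤ ≃ Fin r × ℤ where
  toFun a := (⟨((a - 1) % (r : ℤ)).toNat, by
      have h1 : (0 : ℤ) < (r : ℤ) := by exact_mod_cast hr
      have h2 : 0 ≤ (a - 1) % (r : ℤ) := Int.emod_nonneg _ (by omega)
      have h3 : (a - 1) % (r : ℤ) < (r : ℤ) := Int.emod_lt_of_pos _ h1
      omega⟩, -((a - 1) / (r : ℤ)))
  invFun p := (p.1 : ℤ) + 1 - p.2 * r
  left_inv := by
    intro a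
    have h1 : (0 : ℤ) < (r : ℤ) := by exact_mod_cast hr
    have h2 : 0 ≤ (a - 1) % (r : ℤ) := Int.emod_nonneg _ (by omega)
    have h4 := Int.emod_add_mul_ediv (a - 1) (r : ℤ)
    simp only
    rw [Int.toNat_of_nonneg h2]
    linarith
  right_inv := by
    rintro ⟨i, k⟩
    have h1 : (0 : ℤ) < (r : ℤ) := by exact_mod_cast hr
    have hi0 : (0 : ℤ) ≤ (i : ℤ) := Int.ofNat_nonneg _
    have hir : (i : ℤ) < (r : ℤ) := by exact_mod_cast i.2
    have e0 : ((i : ℤ) + 1 - k * r) - 1 = (i : ℤ) + (r : ℤ) * (-k) := by ring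
    have e1 : (((i : ℤ) + 1 - k * r) - 1) % (r : ℤ) = (i : ℤ) := by
      rw [e0, Int.add_mul_emod_self_left, Int.emod_eq_of_lt hi0 hir]
    have e2 : (((i : ℤ) + 1 - k * r) - 1) / (r : ℤ) = -k := by
      rw [e0, Int.add_mul_ediv_left _ _ (ne_of_gt h1), Int.ediv_eq_zero_of_lt hi0 hir, zero_add]
    simp only
    ext
    · simp [e1]
    · simp [e2]

def myBasis (F : Type*) [Field F] (r : ℕ) (hr : 0 < r) :
    Module.Basis ℤ F (Fin r → LaurentPolynomial F) :=
  ((Pi.basis fun _ : Fin r => (AddMonoidAlgebra.basis ℤ F : Module.Basis ℤ F (LaurentPolynomial F))).reindex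
    (Equiv.sigmaEquivProd (Fin r) ℤ)).reindex (idxEquiv r hr).symm

lemma prodBasis_apply (F : Type*) [Field F] (r : ℕ) (e2 : ℤ ≃ Fin r × ℤ) (a : ℤ) :
    (((Pi.basis fun _ : Fin r => (AddMonoidAlgebra.basis ℤ F : Module.Basis ℤ F (LaurentPolynomial F))).reindex
      (Equiv.sigmaEquivProd (Fin r) ℤ)).reindex e2.symm) a
    = Pi.single (e2 a).1 (LaurentPolynomial.T (e2 a).2) := by
  rw [Module.Basis.reindex_apply, Module.Basis.reindex_apply, Equiv.symm_symm]
  simp [Pi.basis_apply]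

lemma myBasis_apply (F : Type*) [Field F] (r : ℕ) (hr : 0 < r) (a : ℤ) :
    myBasis F r hr a = vb F r a := by
  have h := prodBasis_apply F r (idxEquiv r hr) a
  rw [vb, dif_pos hr]
  exact h

-- combinatorics
lemma bnd_pred {n r : ℕ} (hn : 1 ≤ n) {lam : ℤ → ℕ} (hl : lam ∈ LambdaSet n r) (m : ℤ) :
    bnd n r lam (m - 1)
      = ((m - 1) / n) * r + ∑ t ∈ Finset.Icc (1 : ℤ) ((m - 1) % n), (lam t : ℤ) := by
  have hn0 : (0 : ℤ) < (n : ℤ) := by exact_mod_cast hn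
  set q := (m - 1) / (n : ℤ) with hq
  set s := (m - 1) % (n : ℤ) with hs
  have hs0 : 0 ≤ s := Int.emod_nonneg _ (by omega)
  have hsn : s < n := Int.emod_lt_of_pos _ hn0
  have hm1 : m - 1 = (n : ℤ) * q + s := by
    have h4 := Int.emod_add_mul_ediv (m - 1) (n : ℤ)
    rw [hq, hs]; linarith
  rcases eq_or_lt_of_le hs0 with h0 | h0
  · -- s = 0
    have e1 : m - 1 - 1 = ((n : ℤ) - 1) + (n : ℤ) * (q - 1) := by linear_combination hm1 - h0
    have e2 : (m - 1 - 1) / (n : ℤ) = q - 1 := by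
      rw [e1, Int.add_mul_ediv_left _ _ (ne_of_gt hn0),
        Int.ediv_eq_zero_of_lt (by omega) (by omega), zero_add]
    have e3 : (m - 1 - 1) % (n : ℤ) = (n : ℤ) - 1 := by
      rw [e1, Int.add_mul_emod_self_left, Int.emod_eq_of_lt (by omega) (by omega)]
    have hsum : ∑ t ∈ Finset.Icc (1 : ℤ) (n : ℤ), (lam t : ℤ) = (r : ℤ) := by
      exact_mod_cast congrArg (fun x : ℕ => (x : ℤ)) hl.2
    simp only [bnd]
    rw [e2, e3, show (n : ℤ) - 1 + 1 = (n : ℤ) by ring, hsum, ← h0]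
    simp [Finset.Icc_eq_empty_of_lt (show (0:ℤ) < 1 by norm_num)]
    ring
  · -- 0 < s
    have e1 : m - 1 - 1 = (s - 1) + (n : ℤ) * q := by linear_combination hm1
    have e2 : (m - 1 - 1) / (n : ℤ) = q := by
      rw [e1, Int.add_mul_ediv_left _ _ (ne_of_gt hn0),
        Int.ediv_eq_zero_of_lt (by omega) (by omega), zero_add]
    have e3 : (m - 1 - 1) % (n : ℤ) = s - 1 := by
      rw [e1, Int.add_mul_emod_self_left, Int.emod_eq_of_lt (by omega) (by omega)]
    simp only [bnd]
    rw [e2, e3, show s - 1 + 1 = s by ring]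

lemma bnd_mono {n r : ℕ} (hn : 1 ≤ n) {lam : ℤ → ℕ} (hl : lam ∈ LambdaSet n r) (m : ℤ) :
    bnd n r lam (m - 1) ≤ bnd n r lam m := by
  rw [bnd_pred hn hl, bnd]
  apply add_le_add le_rfl
  apply Finset.sum_le_sum_of_subset_of_nonneg
  · exact Finset.Icc_subset_Icc_right (by omega)
  · intro t _ _; positivity

lemma sdiff_bnd {n r : ℕ} (hn : 1 ≤ n) {lam : ℤ → ℕ} (hl : lam ∈ LambdaSet n r) (m : ℤ) :
    {a : ℤ | a ≤ bnd n r lam m} \ {a : ℤ | a ≤ bnd n r lam (m - 1)} = Rset n r lam m := by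
  ext a
  have h1 := bnd_pred hn hl m
  simp only [Set.mem_diff, Set.mem_setOf_eq, Rset, bnd] at *
  omega

lemma Rset_finite {n r : ℕ} (hn : 1 ≤ n) {lam : ℤ → ℕ} (hl : lam ∈ LambdaSet n r) (m : ℤ) :
    (Rset n r lam m).Finite := by
  rw [← sdiff_bnd hn hl m]
  have hsub : {a : ℤ | a ≤ bnd n r lam m} \ {a : ℤ | a ≤ bnd n r lam (m - 1)}
      ⊆ Set.Ioc (bnd n r lam (m - 1)) (bnd n r lam m) := by
    intro a ha
    simp only [Set.mem_diff, Set.mem_setOf_eq] at ha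
    simp only [Set.mem_Ioc]
    omega
  exact (Set.finite_Ioc _ _).subset hsub

end AuxProof

/-- for `λ, μ ∈ Λ_Δ(n,r)`, `d ∈ D^Δ_{λ,μ}` and `A = J_Δ(λ,d,μ)`,
with `L_m = span_𝔽{v_a | a ≤ Σ_{1≤j≤i} λ_j + kr}` and
`L'_m = span_𝔽{v_{d(a)} | a ≤ Σ_{1≤j≤i} μ_j + kr}` (for `m = i + kn`, `1 ≤ i ≤ n`),
one has `dim_𝔽 (L_i ∩ L'_j)/(L_{i-1} ∩ L'_j + L_i ∩ L'_{j-1}) = a_{i,j}` for all `i, j`. -/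
theorem dim_filtration_quotient_eq_JMat (F : Type*) [Field F] (n r : ℕ)
    (hn : 1 ≤ n) (hr : 1 ≤ r) (lam mu : ℤ → ℕ)
    (hlam : lam ∈ LambdaSet n r) (hmu : mu ∈ LambdaSet n r)
    (d : Equiv.Perm ℤ) (hd : d ∈ DRep2 n r lam mu) :
    ∀ i j : ℤ,
      Module.finrank F
        ((↥(Lsub F n r lam i ⊓ Lsub' F n r mu d j)) ⧸
          (Submodule.comap (Lsub F n r lam i ⊓ Lsub' F n r mu d j).subtype
            ((Lsub F n r lam (i - 1) ⊓ Lsub' F n r mu d j) ⊔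
             (Lsub F n r lam i ⊓ Lsub' F n r mu d (j - 1)))))
        = JMat n r lam mu d i j := by
  intro i j
  have hr0 : 0 < r := hr
  have hBa := myBasis_apply F r hr0
  set B := myBasis F r hr0 with hBdef
  have hL : ∀ m : ℤ, Lsub F n r lam m
      = Submodule.span F (B '' {a : ℤ | a ≤ bnd n r lam m}) := by
    intro m
    unfold Lsub
    congr 1
    ext x
    simp only [Set.mem_setOf_eq, Set.mem_image]
    constructor
    · rintro ⟨a, ha, rfl⟩; exact ⟨a, ha, hBa a⟩
    · rintro ⟨a, ha, rfl⟩; exact ⟨a, ha, hBa a⟩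
  have hL' : ∀ m : ℤ, Lsub' F n r mu d m
      = Submodule.span F (B '' (d '' {a : ℤ | a ≤ bnd n r mu m})) := by
    intro m
    unfold Lsub'
    congr 1
    ext x
    simp only [Set.mem_setOf_eq, Set.mem_image]
    constructor
    · rintro ⟨a, ha, rfl⟩; exact ⟨d a, ⟨a, ha, rfl⟩, hBa (d a)⟩
    · rintro ⟨b, ⟨a, ha, rfl⟩, rfl⟩; exact ⟨a, ha, hBa (d a)⟩
  rw [hL i, hL (i - 1), hL' j, hL' (j - 1), span_inf, span_inf, span_inf,
    ← Submodule.span_union, ← Set.image_union]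
  have hs : {a : ℤ | a ≤ bnd n r lam (i - 1)} ⊆ {a : ℤ | a ≤ bnd n r lam i} :=
    fun a ha => le_trans ha (bnd_mono hn hlam i)
  have ht : (d '' {a : ℤ | a ≤ bnd n r mu (j - 1)}) ⊆ (d '' {a : ℤ | a ≤ bnd n r mu j}) :=
    Set.image_mono (fun a ha => le_trans ha (bnd_mono hn hmu j))
  have hw : ({a : ℤ | a ≤ bnd n r lam (i - 1)} ∩ (d '' {a : ℤ | a ≤ bnd n r mu j})) ∪
      ({a : ℤ | a ≤ bnd n r lam i} ∩ (d '' {a : ℤ | a ≤ bnd n r mu (j - 1)}))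
      ⊆ {a : ℤ | a ≤ bnd n r lam i} ∩ (d '' {a : ℤ | a ≤ bnd n r mu j}) := by
    rintro x (⟨h1, h2⟩ | ⟨h1, h2⟩)
    · exact ⟨hs h1, h2⟩
    · exact ⟨h1, ht h2⟩
  have hdiff : ({a : ℤ | a ≤ bnd n r lam i} ∩ (d '' {a : ℤ | a ≤ bnd n r mu j})) \
      (({a : ℤ | a ≤ bnd n r lam (i - 1)} ∩ (d '' {a : ℤ | a ≤ bnd n r mu j})) ∪
       ({a : ℤ | a ≤ bnd n r lam i} ∩ (d '' {a : ℤ | a ≤ bnd n r mu (j - 1)})))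
      = Rset n r lam i ∩ (d '' Rset n r mu j) := by
    have h1 : ∀ (s1 s2 t1 t2 : Set ℤ), (s2 ∩ t2) \ ((s1 ∩ t2) ∪ (s2 ∩ t1))
        = (s2 \ s1) ∩ (t2 \ t1) := by
      intro s1 s2 t1 t2
      ext x
      simp only [Set.mem_diff, Set.mem_inter_iff, Set.mem_union]
      tauto
    rw [h1, sdiff_bnd hn hlam i, ← Set.image_diff d.injective, sdiff_bnd hn hmu j]
  have hfin : (({a : ℤ | a ≤ bnd n r lam i} ∩ (d '' {a : ℤ | a ≤ bnd n r mu j})) \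
      (({a : ℤ | a ≤ bnd n r lam (i - 1)} ∩ (d '' {a : ℤ | a ≤ bnd n r mu j})) ∪
       ({a : ℤ | a ≤ bnd n r lam i} ∩ (d '' {a : ℤ | a ≤ bnd n r mu (j - 1)})))).Finite := by
    rw [hdiff]
    exact Set.Finite.inter_of_left (Rset_finite hn hlam i) _
  rw [aux_finrank B hw hfin, hdiff]
  rfl
end
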